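/- arXiv:2407.12719 — 7 statements merged into one kernel-verified Lean document; each statement's English description precedes it below -/
import Mathlib

section
/- Let a, b ≥ 1 be integers, let u be a binary word of length a−1 and v a binary word of length b−1. Then C(a+b, a) · d_a(u) · d_b(v) = d_{a+b}(u0v) + d_{a+b}(u1v), where u0v and u1v denote the concatenations of u, a single letter 0 (respectively 1), and v, and C(a+b, a) is the binomial coefficient. -/
/-- For a finite binary word `u` of length `n - 1` (so `n = u.length + 1`), `dCountL u` is
the number of permutations `π` of `{1,…,n}` (modeled as `Fin n`, zero-based) such that for
every `1 ≤ i ≤ n-1`, `π(i) > π(i+1)` iff the `i`-th letter of `u` equals `1` (i.e. `true`). -/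
noncomputable def dCountL (u : List Bool) : ℕ :=
  Nat.card {π : Equiv.Perm (Fin (u.length + 1)) //
    ∀ i : Fin u.length, (π i.succ < π i.castSucc ↔ u.get i = true)}

/-- Descent condition with natural-number indexing. -/
def NCond (m : ℕ) (f : ℕ → Bool) (π : Equiv.Perm (Fin (m + 1))) : Prop :=
  ∀ i, ∀ _ : i < m, (π ⟨i + 1, by omega⟩ < π ⟨i, by omega⟩ ↔ f i = true)

lemma dCountL_eq (w : List Bool) :
    dCountL w = Nat.card {π : Equiv.Perm (Fin (w.length + 1)) //
      NCond w.length (fun i => w.getD i false) π} := by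
  unfold dCountL
  apply Nat.card_congr (Equiv.subtypeEquivRight _)
  intro π
  constructor
  · intro h i hi
    have := h ⟨i, hi⟩
    have h1 : (⟨i, hi⟩ : Fin w.length).succ = ⟨i + 1, by omega⟩ := rfl
    have h2 : (⟨i, hi⟩ : Fin w.length).castSucc = ⟨i, by omega⟩ := rfl
    rw [h1, h2] at this
    rw [this]
    simp [List.getD_eq_getElem _ _ hi, List.getElem?_eq_getElem hi]
  · intro h i
    have := h i.val i.isLt
    have h1 : i.succ = ⟨i.val + 1, by omega⟩ := rfl
    have h2 : i.castSucc = ⟨i.val, by omega⟩ := rfl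
    rw [h1, h2, this]
    simp [List.getElem?_eq_getElem i.isLt, List.getD]

lemma NCond_card_congr {m m' : ℕ} (h : m = m') {f f' : ℕ → Bool}
    (hf : ∀ i < m, f i = f' i) :
    Nat.card {π : Equiv.Perm (Fin (m + 1)) // NCond m f π} =
      Nat.card {π : Equiv.Perm (Fin (m' + 1)) // NCond m' f' π} := by
  subst h
  apply Nat.card_congr (Equiv.subtypeEquivRight _)
  intro π
  unfold NCond
  constructor
  · intro H i hi; rw [← hf i hi]; exact H i hi
  · intro H i hi; rw [hf i hi]; exact H i hi

/-- Glued letter sequence: `f` on the first `p` letters, then `c`, then `g`. -/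
def glue (p : ℕ) (f g : ℕ → Bool) (c : Bool) : ℕ → Bool :=
  fun i => if i < p then f i else if i = p then c else g (i - (p + 1))

lemma glue_lt {p : ℕ} {f g : ℕ → Bool} {c : Bool} {i : ℕ} (h : i < p) :
    glue p f g c i = f i := by simp [glue, h]

lemma glue_eq {p : ℕ} (f g : ℕ → Bool) (c : Bool) :
    glue p f g c p = c := by simp [glue]

lemma glue_gt {p : ℕ} {f g : ℕ → Bool} {c : Bool} {i : ℕ} (h : p < i) :
    glue p f g c i = g (i - (p + 1)) := by
  have h1 : ¬ i < p := by omega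
  have h2 : ¬ i = p := by omega
  simp [glue, h1, h2]

lemma glue_ne {p : ℕ} {f g : ℕ → Bool} {c c' : Bool} {i : ℕ} (h : i ≠ p) :
    glue p f g c i = glue p f g c' i := by
  rcases lt_or_gt_of_ne h with h' | h'
  · rw [glue_lt h', glue_lt h']
  · rw [glue_gt h', glue_gt h']

/-- Partial descent condition on a permutation of `Fin (p+q+2)` : descents agree with `f`
on the first `p` slots and `g` on the last `q` slots; no condition at slot `p`. -/
def PP (p q : ℕ) (f g : ℕ → Bool) (τ : Equiv.Perm (Fin (p + q + 2))) : Prop :=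
  ∀ i, ∀ _ : i < p + q + 1, i ≠ p →
    (τ ⟨i + 1, by omega⟩ < τ ⟨i, by omega⟩ ↔ glue p f g false i = true)

/-- Position-splitting equivalence. -/
def posE (p q : ℕ) : Fin (p + 1) ⊕ Fin (q + 1) ≃ Fin (p + q + 2) where
  toFun := Sum.elim (fun i => ⟨i, by omega⟩) (fun j => ⟨p + 1 + j, by omega⟩)
  invFun k := if h : (k : ℕ) < p + 1 then .inl ⟨k, h⟩ else .inr ⟨k - (p + 1), by omega⟩
  left_inv := by
    rintro (i | j)
    · simp [i.isLt]
    · have : ¬ p + 1 + (j : ℕ) < p + 1 := by omega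
      simp only [Sum.elim_inr, this, dif_neg, not_false_iff]
      refine (dif_neg this).trans ?_
      congr 1
      exact Fin.ext (by simp)
  right_inv := by
    intro k
    by_cases h : (k : ℕ) < p + 1
    · simp [h]
    · simp only [h, dif_neg, not_false_iff, Sum.elim_inr]
      exact Fin.ext (by simp; omega)

lemma compl_card (p q : ℕ) (S : Finset (Fin (p + q + 2))) (hS : S.card = p + 1) :
    Sᶜ.card = q + 1 := by
  rw [Finset.card_compl, hS, Fintype.card_fin]
  omega

/-- Value-side equivalence determined by a `(p+1)`-element subset. -/
def valE (p q : ℕ) (S : Finset (Fin (p + q + 2))) (hS : S.card = p + 1) :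
    Fin (p + 1) ⊕ Fin (q + 1) ≃ Fin (p + q + 2) :=
  (Equiv.sumCongr (S.orderIsoOfFin hS).toEquiv
      ((Sᶜ.orderIsoOfFin (compl_card p q S hS)).toEquiv.trans
        (Equiv.subtypeEquivRight (fun _ => Finset.mem_compl)))).trans
    (Equiv.sumCompl (· ∈ S))

lemma valE_inl (p q : ℕ) (S : Finset (Fin (p + q + 2))) (hS : S.card = p + 1)
    (i : Fin (p + 1)) : valE p q S hS (Sum.inl i) = (S.orderIsoOfFin hS i : Fin (p + q + 2)) := by
  simp [valE]

lemma valE_inr (p q : ℕ) (S : Finset (Fin (p + q + 2))) (hS : S.card = p + 1)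
    (j : Fin (q + 1)) :
    valE p q S hS (Sum.inr j) = (Sᶜ.orderIsoOfFin (compl_card p q S hS) j : Fin (p + q + 2)) := by
  simp [valE]

/-- The shuffle permutation. -/
def Psi (p q : ℕ) (S : Finset (Fin (p + q + 2))) (hS : S.card = p + 1)
    (π : Equiv.Perm (Fin (p + 1))) (σ : Equiv.Perm (Fin (q + 1))) :
    Equiv.Perm (Fin (p + q + 2)) :=
  (posE p q).symm.trans ((Equiv.sumCongr π σ).trans (valE p q S hS))

lemma Psi_lt (p q : ℕ) (S : Finset (Fin (p + q + 2))) (hS : S.card = p + 1)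
    (π : Equiv.Perm (Fin (p + 1))) (σ : Equiv.Perm (Fin (q + 1)))
    (i : ℕ) (h : i < p + 1) :
    Psi p q S hS π σ ⟨i, by omega⟩ = (S.orderIsoOfFin hS (π ⟨i, h⟩) : Fin (p + q + 2)) := by
  have h1 : (posE p q).symm ⟨i, by omega⟩ = Sum.inl ⟨i, h⟩ := by
    apply (posE p q).injective
    simp [posE, Nat.le_of_lt_succ h]
  simp only [Psi, Equiv.trans_apply, h1, Equiv.sumCongr_apply, Sum.map_inl, valE_inl]

lemma Psi_ge (p q : ℕ) (S : Finset (Fin (p + q + 2))) (hS : S.card = p + 1)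
    (π : Equiv.Perm (Fin (p + 1))) (σ : Equiv.Perm (Fin (q + 1)))
    (j : ℕ) (h : j < q + 1) :
    Psi p q S hS π σ ⟨p + 1 + j, by omega⟩ =
      (Sᶜ.orderIsoOfFin (compl_card p q S hS) (σ ⟨j, h⟩) : Fin (p + q + 2)) := by
  have h1 : (posE p q).symm ⟨p + 1 + j, by omega⟩ = Sum.inr ⟨j, h⟩ := by
    apply (posE p q).injective
    have hx : ¬ (p + 1 + j < p + 1) := by omega
    simp only [posE, Equiv.coe_fn_mk, Equiv.coe_fn_symm_mk, hx, dif_neg, not_false_iff,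
      Sum.elim_inr]
    exact Fin.ext (by simp)
  simp only [Psi, Equiv.trans_apply, h1, Equiv.sumCongr_apply, Sum.map_inr, valE_inr]

lemma PP_of_NCond (p q : ℕ) (f g : ℕ → Bool) (c : Bool) (τ : Equiv.Perm (Fin (p + q + 2)))
    (h : NCond (p + q + 1) (glue p f g c) τ) : PP p q f g τ := by
  intro i hi hne
  rw [glue_ne (c := false) (c' := c) hne]
  exact h i hi

lemma NCond_of_PP (p q : ℕ) (f g : ℕ → Bool) (c : Bool) (τ : Equiv.Perm (Fin (p + q + 2)))
    (h : PP p q f g τ)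
    (hd : τ ⟨p + 1, by omega⟩ < τ ⟨p, by omega⟩ ↔ c = true) :
    NCond (p + q + 1) (glue p f g c) τ := by
  intro i hi
  by_cases hne : i = p
  · subst hne
    rw [glue_eq]
    exact hd
  · rw [glue_ne (c' := false) hne]
    exact h i hi hne

lemma stepA (p q : ℕ) (f g : ℕ → Bool) :
    Nat.card {τ : Equiv.Perm (Fin (p + q + 2)) // PP p q f g τ} =
      Nat.card {τ : Equiv.Perm (Fin (p + q + 2)) // NCond (p + q + 1) (glue p f g false) τ} +
        Nat.card {τ : Equiv.Perm (Fin (p + q + 2)) // NCond (p + q + 1) (glue p f g true) τ} := by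
  rw [← Nat.card_sum]
  apply Nat.card_congr
  refine
    { toFun := fun x =>
        if hd : x.1 ⟨p + 1, by omega⟩ < x.1 ⟨p, by omega⟩ then
          Sum.inr ⟨x.1, NCond_of_PP p q f g true x.1 x.2 (by simp [hd])⟩
        else Sum.inl ⟨x.1, NCond_of_PP p q f g false x.1 x.2 (by simp [hd])⟩,
      invFun := Sum.elim (fun y => ⟨y.1, PP_of_NCond p q f g false y.1 y.2⟩)
        (fun y => ⟨y.1, PP_of_NCond p q f g true y.1 y.2⟩),
      left_inv := ?_, right_inv := ?_ }
  · rintro ⟨τ, h⟩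
    dsimp only
    split <;> rfl
  · rintro (⟨τ, h⟩ | ⟨τ, h⟩)
    · have hd : ¬ (τ ⟨p + 1, by omega⟩ < τ ⟨p, by omega⟩) := by
        have := h p (by omega)
        rw [glue_eq] at this
        simp at this
        exact not_lt.mpr this
      simp only [Sum.elim_inl, hd, dif_neg, not_false_iff]
      exact dif_neg hd
    · have hd : τ ⟨p + 1, by omega⟩ < τ ⟨p, by omega⟩ := by
        have := h p (by omega)
        rw [glue_eq] at this
        simpa using this
      simp only [Sum.elim_inr, hd, dif_pos]
      exact dif_pos hd

lemma Psi_ge' (p q : ℕ) (S : Finset (Fin (p + q + 2))) (hS : S.card = p + 1)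
    (π : Equiv.Perm (Fin (p + 1))) (σ : Equiv.Perm (Fin (q + 1)))
    (j k : ℕ) (h : j < q + 1) (hk : k = p + 1 + j) (hk2 : k < p + q + 2) :
    Psi p q S hS π σ ⟨k, hk2⟩ =
      (Sᶜ.orderIsoOfFin (compl_card p q S hS) (σ ⟨j, h⟩) : Fin (p + q + 2)) := by
  subst hk
  exact Psi_ge p q S hS π σ j h

lemma Psi_PP (p q : ℕ) (f g : ℕ → Bool) (S : Finset (Fin (p + q + 2))) (hS : S.card = p + 1)
    (π : Equiv.Perm (Fin (p + 1))) (σ : Equiv.Perm (Fin (q + 1)))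
    (hπ : NCond p f π) (hσ : NCond q g σ) : PP p q f g (Psi p q S hS π σ) := by
  intro i hi hne
  rcases lt_or_gt_of_ne hne with h | h
  · rw [Psi_lt p q S hS π σ (i + 1) (by omega), Psi_lt p q S hS π σ i (by omega),
      glue_lt h, Subtype.coe_lt_coe, OrderIso.lt_iff_lt]
    exact hπ i h
  · obtain ⟨j, rfl⟩ : ∃ j, i = p + 1 + j := ⟨i - (p + 1), by omega⟩
    have hj : j < q := by omega
    rw [Psi_ge' p q S hS π σ (j + 1) (p + 1 + j + 1) (by omega) (by omega) (by omega),
      Psi_ge p q S hS π σ j (by omega), glue_gt h, Subtype.coe_lt_coe, OrderIso.lt_iff_lt]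
    have hjj : p + 1 + j - (p + 1) = j := by omega
    rw [hjj]
    exact hσ j hj

lemma mem_iff_Psi (p q : ℕ) (S : Finset (Fin (p + q + 2))) (hS : S.card = p + 1)
    (π : Equiv.Perm (Fin (p + 1))) (σ : Equiv.Perm (Fin (q + 1))) (x : Fin (p + q + 2)) :
    x ∈ S ↔ ∃ i : Fin (p + 1), Psi p q S hS π σ ⟨i.val, by have := i.isLt; omega⟩ = x := by
  constructor
  · intro hx
    refine ⟨π.symm ((S.orderIsoOfFin hS).symm ⟨x, hx⟩), ?_⟩
    rw [Psi_lt p q S hS π σ _ (Fin.is_lt _)]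
    simp
  · rintro ⟨i, rfl⟩
    rw [Psi_lt p q S hS π σ i.val i.isLt]
    exact (S.orderIsoOfFin hS _).2

theorem core (p q : ℕ) (f g : ℕ → Bool) :
    (p + q + 2).choose (p + 1) *
        (Nat.card {π : Equiv.Perm (Fin (p + 1)) // NCond p f π} *
          Nat.card {σ : Equiv.Perm (Fin (q + 1)) // NCond q g σ}) =
      Nat.card {τ : Equiv.Perm (Fin (p + q + 2)) // NCond (p + q + 1) (glue p f g false) τ} +
        Nat.card {τ : Equiv.Perm (Fin (p + q + 2)) // NCond (p + q + 1) (glue p f g true) τ} := by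
  rw [← stepA p q f g]
  have h1 : Nat.card {s : Finset (Fin (p + q + 2)) // s.card = p + 1} =
      (p + q + 2).choose (p + 1) := by
    rw [Nat.card_eq_fintype_card, Fintype.card_finset_len, Fintype.card_fin]
  rw [← h1, ← Nat.card_prod, ← Nat.card_prod]
  apply Nat.card_eq_of_bijective
    (f := fun x : {s : Finset (Fin (p + q + 2)) // s.card = p + 1} ×
        {π : Equiv.Perm (Fin (p + 1)) // NCond p f π} ×
        {σ : Equiv.Perm (Fin (q + 1)) // NCond q g σ} =>
      (⟨Psi p q x.1.1 x.1.2 x.2.1.1 x.2.2.1,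
        Psi_PP p q f g x.1.1 x.1.2 x.2.1.1 x.2.2.1 x.2.1.2 x.2.2.2⟩ :
        {τ : Equiv.Perm (Fin (p + q + 2)) // PP p q f g τ}))
  constructor
  · rintro ⟨⟨S, hS⟩, ⟨π, hπ⟩, ⟨σ, hσ⟩⟩ ⟨⟨S', hS'⟩, ⟨π', hπ'⟩, ⟨σ', hσ'⟩⟩ heq
    have hτ : Psi p q S hS π σ = Psi p q S' hS' π' σ' := congrArg Subtype.val heq
    have hSS : S = S' := by
      ext x
      rw [mem_iff_Psi p q S hS π σ x, mem_iff_Psi p q S' hS' π' σ' x]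
      constructor <;> rintro ⟨i, hi⟩ <;> exact ⟨i, by rw [← hi, hτ]⟩
    subst hSS
    have hππ : π = π' := by
      apply Equiv.ext
      intro i
      have e1 := Psi_lt p q S hS π σ i.val i.isLt
      have e2 := Psi_lt p q S hS' π' σ' i.val i.isLt
      rw [hτ, e2] at e1
      have := (S.orderIsoOfFin hS).injective (Subtype.coe_injective e1.symm)
      simpa using this
    have hσσ : σ = σ' := by
      apply Equiv.ext
      intro j
      have e1 := Psi_ge p q S hS π σ j.val j.isLt
      have e2 := Psi_ge p q S hS' π' σ' j.val j.isLt
      rw [hτ, e2] at e1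
      have := (Sᶜ.orderIsoOfFin (compl_card p q S hS)).injective (Subtype.coe_injective e1.symm)
      simpa using this
    subst hππ
    subst hσσ
    rfl
  · rintro ⟨τ, hτ⟩
    have hposinj : Function.Injective
        (fun i : Fin (p + 1) => τ ⟨i.val, by have := i.isLt; omega⟩) := by
      intro i i' h
      have := congrArg Fin.val (τ.injective h)
      exact Fin.ext (by simpa using this)
    set S : Finset (Fin (p + q + 2)) :=
      Finset.image (fun i : Fin (p + 1) => τ ⟨i.val, by have := i.isLt; omega⟩) Finset.univ
      with hSdef
    have hS : S.card = p + 1 := by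
      rw [hSdef, Finset.card_image_of_injective _ hposinj, Finset.card_univ, Fintype.card_fin]
    have hmemS : ∀ i : ℕ, ∀ h : i < p + 1, τ ⟨i, by omega⟩ ∈ S := by
      intro i h
      rw [hSdef, Finset.mem_image]
      exact ⟨⟨i, h⟩, Finset.mem_univ _, rfl⟩
    have hmemC : ∀ j : ℕ, ∀ h : j < q + 1, τ ⟨p + 1 + j, by omega⟩ ∈ Sᶜ := by
      intro j h
      rw [Finset.mem_compl, hSdef, Finset.mem_image]
      rintro ⟨i, -, hi⟩
      have := congrArg Fin.val (τ.injective hi)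
      simp at this
      have := i.isLt
      omega
    have hπinj : Function.Injective (fun i : Fin (p + 1) =>
        (S.orderIsoOfFin hS).symm ⟨τ ⟨i.val, by have := i.isLt; omega⟩, hmemS i.val i.isLt⟩) := by
      intro i i' h
      have h2 := congrArg Subtype.val ((S.orderIsoOfFin hS).symm.injective h)
      exact hposinj h2
    have hσinj : Function.Injective (fun j : Fin (q + 1) =>
        (Sᶜ.orderIsoOfFin (compl_card p q S hS)).symm
          ⟨τ ⟨p + 1 + j.val, by have := j.isLt; omega⟩, hmemC j.val j.isLt⟩) := by
      intro j j' h
      have h2 := congrArg Subtype.val ((Sᶜ.orderIsoOfFin (compl_card p q S hS)).symm.injective h)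
      have h3 := congrArg Fin.val (τ.injective h2)
      exact Fin.ext (by simpa using h3)
    let π : Equiv.Perm (Fin (p + 1)) :=
      Equiv.ofBijective _ (Finite.injective_iff_bijective.mp hπinj)
    let σ : Equiv.Perm (Fin (q + 1)) :=
      Equiv.ofBijective _ (Finite.injective_iff_bijective.mp hσinj)
    have key : ∀ i : ℕ, ∀ h : i < p + 1,
        (S.orderIsoOfFin hS (π ⟨i, h⟩) : Fin (p + q + 2)) = τ ⟨i, by omega⟩ := by
      intro i h
      show ((S.orderIsoOfFin hS) ((S.orderIsoOfFin hS).symm _) : Fin (p + q + 2)) = _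
      rw [OrderIso.apply_symm_apply]
    have keyC : ∀ j : ℕ, ∀ h : j < q + 1,
        (Sᶜ.orderIsoOfFin (compl_card p q S hS) (σ ⟨j, h⟩) : Fin (p + q + 2)) =
          τ ⟨p + 1 + j, by omega⟩ := by
      intro j h
      show ((Sᶜ.orderIsoOfFin (compl_card p q S hS))
        ((Sᶜ.orderIsoOfFin (compl_card p q S hS)).symm _) : Fin (p + q + 2)) = _
      rw [OrderIso.apply_symm_apply]
    have hπ : NCond p f π := by
      intro i hi
      rw [← OrderIso.lt_iff_lt (S.orderIsoOfFin hS), ← Subtype.coe_lt_coe,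
        key (i + 1) (by omega), key i (by omega)]
      have := hτ i (by omega) (by omega)
      rw [glue_lt hi] at this
      exact this
    have hσ : NCond q g σ := by
      intro j hj
      rw [← OrderIso.lt_iff_lt (Sᶜ.orderIsoOfFin (compl_card p q S hS)), ← Subtype.coe_lt_coe,
        keyC (j + 1) (by omega), keyC j (by omega)]
      have := hτ (p + 1 + j) (by omega) (by omega)
      rw [glue_gt (by omega)] at this
      have hjj : p + 1 + j - (p + 1) = j := by omega
      rw [hjj] at this
      exact this
    refine ⟨⟨⟨S, hS⟩, ⟨π, hπ⟩, ⟨σ, hσ⟩⟩, ?_⟩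
    apply Subtype.ext
    apply Equiv.ext
    rintro ⟨kv, hkv⟩
    by_cases hk : kv < p + 1
    · rw [Psi_lt p q S hS π σ kv hk]
      exact key kv hk
    · obtain ⟨j, rfl⟩ : ∃ j, kv = p + 1 + j := ⟨kv - (p + 1), by omega⟩
      have hj : j < q + 1 := by omega
      rw [Psi_ge p q S hS π σ j hj]
      exact keyC j hj

theorem stmt3 (a b : ℕ) (ha : 1 ≤ a) (hb : 1 ≤ b) (u v : List Bool)
    (hu : u.length = a - 1) (hv : v.length = b - 1) :
    (a + b).choose a * (dCountL u * dCountL v) =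
      dCountL (u ++ false :: v) + dCountL (u ++ true :: v) := by
  have hA : a = u.length + 1 := by omega
  have hB : b = v.length + 1 := by omega
  subst hA hB
  set p := u.length with hp
  set q := v.length with hq
  have hlen : ∀ c : Bool, (u ++ c :: v).length = p + q + 1 := by
    intro c; simp [hp, hq]; omega
  have hget : ∀ c : Bool, ∀ i < (u ++ c :: v).length,
      (u ++ c :: v).getD i false = glue p (fun i => u.getD i false) (fun j => v.getD j false) c i := by
    intro c i hi0
    have hi : i < p + q + 1 := by rw [hlen c] at hi0; exact hi0
    rcases lt_trichotomy i p with h | h | h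
    · rw [glue_lt h, List.getD_eq_getElem _ _ (by rw [hlen]; omega),
        List.getD_eq_getElem _ _ (by omega), List.getElem_append_left (by omega)]
    · subst h
      rw [glue_eq, List.getD_eq_getElem _ _ (by rw [hlen]; omega)]
      rw [List.getElem_append_right (by omega)]
      simp [hp]
    · rw [glue_gt h, List.getD_eq_getElem _ _ (by rw [hlen]; omega),
        List.getD_eq_getElem _ _ (by omega)]
      rw [List.getElem_append_right (by omega)]
      have : i - u.length = (i - (p + 1)) + 1 := by omega
      simp only [this, List.getElem_cons_succ]
  rw [dCountL_eq u, dCountL_eq v, dCountL_eq (u ++ false :: v), dCountL_eq (u ++ true :: v)]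
  rw [NCond_card_congr (hlen false) (hget false), NCond_card_congr (hlen true) (hget true)]
  have hc : (p + 1) + (q + 1) = p + q + 2 := by omega
  rw [hc]
  exact core p q (fun i => u.getD i false) (fun j => v.getD j false)
end

section
/- Let w be an infinite binary word and n ≥ 1. Suppose the positions i with 1 ≤ i ≤ n−1 and w_i = 1 are exactly i_1 < i_2 < ⋯ < i_k. Then d_n(w) = Σ_{r=0}^{k} (−1)^{k−r} · C(n, i_r) · d_{i_r}(w), where by convention i_0 = 0 and d_0(w) = 1, and C(n, i) is the binomial coefficient. -/
open Filter

/-- `dCount w n` is the number of permutations `π` of `{1,…,n}` (modeled as `Fin n`,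
zero-based) such that for every `1 ≤ i ≤ n-1`, `π(i) > π(i+1)` iff the `i`-th letter of the
infinite binary word `w` (1-indexed, `w 0` is irrelevant) equals `1` (i.e. `true`). -/
noncomputable def dCount (w : ℕ → Bool) (n : ℕ) : ℕ :=
  Nat.card {π : Equiv.Perm (Fin n) //
    ∀ i : ℕ, ∀ h : i + 1 < n,
      (π ⟨i + 1, h⟩ < π ⟨i, Nat.lt_of_succ_lt h⟩ ↔ w (i + 1) = true)}


namespace Stmt4Aux

def DC (w : ℕ → Bool) (n : ℕ) (π : Equiv.Perm (Fin n)) : Prop :=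
  ∀ i : ℕ, ∀ h : i + 1 < n,
    (π ⟨i + 1, h⟩ < π ⟨i, Nat.lt_of_succ_lt h⟩ ↔ w (i + 1) = true)

lemma dCount_eq (w : ℕ → Bool) (n : ℕ) :
    dCount w n = Nat.card {π : Equiv.Perm (Fin n) // DC w n π} := rfl

lemma dCount_congr {w w' : ℕ → Bool} {n : ℕ} (h : ∀ j, 1 ≤ j → j < n → w j = w' j) :
    dCount w n = dCount w' n := by
  rw [dCount_eq, dCount_eq]
  exact Nat.card_congr (Equiv.subtypeEquivRight fun π => by
    constructor <;> intro hp i hi <;> have := hp i hi <;>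
      rw [h (i+1) (by omega) (by omega)] at * <;> tauto)

lemma perm_eq_one_of_strictMono {n : ℕ} (π : Equiv.Perm (Fin n)) (h : StrictMono ⇑π) :
    π = 1 := by
  have hc : (Finset.univ : Finset (Fin n)).card = n := by simp
  have h1 : ⇑π = Finset.univ.orderEmbOfFin hc :=
    Finset.orderEmbOfFin_unique hc (fun x => Finset.mem_univ _) h
  have h2 : (id : Fin n → Fin n) = Finset.univ.orderEmbOfFin hc :=
    Finset.orderEmbOfFin_unique hc (fun x => Finset.mem_univ _) strictMono_id
  ext i
  have := congrFun (h1.trans h2.symm) i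
  simp at this
  simp [this]

lemma strictMono_of_consec {n N : ℕ} {f : Fin N → Fin n}
    (h : ∀ i : ℕ, (hi : i + 1 < N) → f ⟨i, Nat.lt_of_succ_lt hi⟩ < f ⟨i+1, hi⟩) :
    StrictMono f := by
  have key : ∀ d a : ℕ, (ha : a + d < N) → 0 < d → f ⟨a, by omega⟩ < f ⟨a + d, ha⟩ := by
    intro d
    induction d with
    | zero => omega
    | succ e ih =>
      intro a ha _
      rcases Nat.eq_zero_or_pos e with he | he
      · subst he; exact h a (by omega)
      · exact (ih a (by omega) he).trans (by
          have := h (a + e) (by omega)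
          convert this using 3 <;> first | rfl | omega)
  intro a b hab
  have : f ⟨(a : ℕ), a.isLt⟩ < f ⟨(a : ℕ) + ((b : ℕ) - a), by omega⟩ :=
    key ((b : ℕ) - a) a (by omega) (by omega)
  convert this using 3 <;> first | rfl | omega

lemma dCount_one {w : ℕ → Bool} {n : ℕ} (h : ∀ j, 1 ≤ j → j < n → w j = false) :
    dCount w n = 1 := by
  rw [dCount_eq, Nat.card_eq_one_iff_unique]
  constructor
  · constructor
    intro ⟨π, hπ⟩ ⟨τ, hτ⟩
    have hπ1 : π = 1 := perm_eq_one_of_strictMono π (strictMono_of_consec (fun i hi => by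
      have h1 := (hπ i hi).not.mpr (by simp [h (i+1) (by omega) hi])
      have h2 : π ⟨i, Nat.lt_of_succ_lt hi⟩ ≠ π ⟨i+1, hi⟩ :=
        fun he => by have := π.injective he; simp [Fin.ext_iff] at this
      omega))
    have hτ1 : τ = 1 := perm_eq_one_of_strictMono τ (strictMono_of_consec (fun i hi => by
      have h1 := (hτ i hi).not.mpr (by simp [h (i+1) (by omega) hi])
      have h2 : τ ⟨i, Nat.lt_of_succ_lt hi⟩ ≠ τ ⟨i+1, hi⟩ :=
        fun he => by have := τ.injective he; simp [Fin.ext_iff] at this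
      omega))
    simp [hπ1, hτ1]
  · exact ⟨⟨1, fun i hi => by
      simp [h (i+1) (by omega) hi, Fin.lt_def]⟩⟩


section BP

variable {n m : ℕ}

lemma compl_card (hm : m ≤ n) {S : Finset (Fin n)} (hS : S.card = m) :
    Sᶜ.card = n - m := by
  rw [Finset.card_compl, hS, Fintype.card_fin]

/-- Build a permutation of `Fin n` from a set `S` of size `m` and a permutation of `Fin m`:
the first `m` positions enumerate `S` in the pattern of `σ`, the rest enumerate `Sᶜ`
increasingly. -/
def bp (hm : m ≤ n) (S : Finset (Fin n)) (hS : S.card = m) (σ : Equiv.Perm (Fin m)) :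
    Equiv.Perm (Fin n) :=
  ((finCongr (Nat.add_sub_cancel' hm).symm).trans finSumFinEquiv.symm).trans <|
    (Equiv.sumCongr (σ.trans (S.orderIsoOfFin hS).toEquiv)
      ((Sᶜ.orderIsoOfFin (compl_card hm hS)).toEquiv.trans
        (Equiv.subtypeEquivRight fun x => Finset.mem_compl))).trans
      (Equiv.sumCompl (· ∈ S))

lemma bp_apply_lt (hm : m ≤ n) (S : Finset (Fin n)) (hS : S.card = m) (σ : Equiv.Perm (Fin m))
    (i : Fin n) (hi : (i : ℕ) < m) :
    bp hm S hS σ i = (S.orderIsoOfFin hS (σ ⟨i, hi⟩) : Fin n) := by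
  unfold bp
  simp only [Equiv.trans_apply]
  have h1 : finSumFinEquiv.symm ((finCongr (Nat.add_sub_cancel' hm).symm) i)
      = Sum.inl (⟨i, hi⟩ : Fin m) := by
    rw [Equiv.symm_apply_eq, finSumFinEquiv_apply_left]
    ext
    simp [Fin.castAdd]
  rw [h1]
  simp

lemma bp_apply_ge (hm : m ≤ n) (S : Finset (Fin n)) (hS : S.card = m) (σ : Equiv.Perm (Fin m))
    (i : Fin n) (hi : m ≤ (i : ℕ)) :
    bp hm S hS σ i
      = (Sᶜ.orderIsoOfFin (compl_card hm hS) ⟨(i : ℕ) - m, by omega⟩ : Fin n) := by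
  unfold bp
  simp only [Equiv.trans_apply]
  have h1 : finSumFinEquiv.symm ((finCongr (Nat.add_sub_cancel' hm).symm) i)
      = Sum.inr (⟨(i : ℕ) - m, by omega⟩ : Fin (n - m)) := by
    rw [Equiv.symm_apply_eq, finSumFinEquiv_apply_right]
    ext
    simp [Fin.natAdd]
    omega
  rw [h1]
  simp

lemma bp_mem (hm : m ≤ n) (S : Finset (Fin n)) (hS : S.card = m) (σ : Equiv.Perm (Fin m))
    (i : Fin n) (hi : (i : ℕ) < m) : bp hm S hS σ i ∈ S := by
  rw [bp_apply_lt hm S hS σ i hi]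
  exact (S.orderIsoOfFin hS (σ ⟨i, hi⟩)).2

lemma bp_not_mem (hm : m ≤ n) (S : Finset (Fin n)) (hS : S.card = m) (σ : Equiv.Perm (Fin m))
    (i : Fin n) (hi : m ≤ (i : ℕ)) : bp hm S hS σ i ∉ S := by
  rw [bp_apply_ge hm S hS σ i hi]
  exact Finset.mem_compl.mp (Sᶜ.orderIsoOfFin (compl_card hm hS) ⟨(i : ℕ) - m, by omega⟩).2

lemma bp_lt_low (hm : m ≤ n) (S : Finset (Fin n)) (hS : S.card = m) (σ : Equiv.Perm (Fin m))
    (i j : Fin n) (hi : (i : ℕ) < m) (hj : (j : ℕ) < m) :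
    (bp hm S hS σ i < bp hm S hS σ j ↔ σ ⟨i, hi⟩ < σ ⟨j, hj⟩) := by
  rw [bp_apply_lt hm S hS σ i hi, bp_apply_lt hm S hS σ j hj, Subtype.coe_lt_coe,
    OrderIso.lt_iff_lt]

lemma bp_lt_high (hm : m ≤ n) (S : Finset (Fin n)) (hS : S.card = m) (σ : Equiv.Perm (Fin m))
    (i j : Fin n) (hi : m ≤ (i : ℕ)) (hj : m ≤ (j : ℕ)) (hij : (i : ℕ) < j) :
    bp hm S hS σ i < bp hm S hS σ j := by
  rw [bp_apply_ge hm S hS σ i hi, bp_apply_ge hm S hS σ j hj, Subtype.coe_lt_coe,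
    OrderIso.lt_iff_lt]
  simp only [Fin.mk_lt_mk]
  omega

lemma bp_inj (hm : m ≤ n) (S T : Finset (Fin n)) (hS : S.card = m) (hT : T.card = m)
    (σ τ : Equiv.Perm (Fin m)) (h : bp hm S hS σ = bp hm T hT τ) : S = T ∧ σ = τ := by
  have hsub : S ⊆ T := by
    intro x hx
    set z : Fin m := σ.symm ((S.orderIsoOfFin hS).symm ⟨x, hx⟩) with hz
    have hzn : (z : ℕ) < n := lt_of_lt_of_le z.isLt hm
    have hxv : bp hm S hS σ ⟨(z : ℕ), hzn⟩ = x := by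
      rw [bp_apply_lt hm S hS σ _ z.isLt]
      simp [hz]
    have := bp_mem hm T hT τ ⟨(z : ℕ), hzn⟩ z.isLt
    rw [← h, hxv] at this
    exact this
  have hST : S = T := Finset.eq_of_subset_of_card_le hsub (by rw [hS, hT])
  subst hST
  refine ⟨rfl, ?_⟩
  ext z
  have hzn : (z : ℕ) < n := lt_of_lt_of_le z.isLt hm
  have h1 := bp_apply_lt hm S hS σ ⟨(z : ℕ), hzn⟩ z.isLt
  have h2 := bp_apply_lt hm S hT τ ⟨(z : ℕ), hzn⟩ z.isLt
  rw [h] at h1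
  have h3 : (S.orderIsoOfFin hS (σ z) : Fin n) = (S.orderIsoOfFin hT (τ z) : Fin n) := by
    have : hS = hT := rfl
    rw [this] at h1 ⊢
    rw [← h2, ← h1]
  have h4 := Subtype.coe_injective h3
  have : hS = hT := rfl
  rw [this] at h4
  have := (S.orderIsoOfFin hT).injective h4
  have h5 : σ z = τ z := by simpa using this
  simp [h5]

/-- Any permutation which is increasing on positions `≥ m` is of the form `bp`. -/
lemma bp_surj (hm : m ≤ n) (π : Equiv.Perm (Fin n))
    (htail : ∀ i : ℕ, m ≤ i → (h2 : i + 1 < n) →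
      π ⟨i, Nat.lt_of_succ_lt h2⟩ < π ⟨i + 1, h2⟩) :
    ∃ (S : Finset (Fin n)) (hS : S.card = m) (σ : Equiv.Perm (Fin m)),
      bp hm S hS σ = π := by
  classical
  set S : Finset (Fin n) := Finset.image (fun z : Fin m => π (Fin.castLE hm z)) Finset.univ
    with hSdef
  have hS : S.card = m := by
    rw [hSdef, Finset.card_image_of_injective _
      (fun a b hab => Fin.castLE_injective hm (π.injective hab))]
    simp
  have hmemS : ∀ z : Fin m, π (Fin.castLE hm z) ∈ S := by
    intro z
    rw [hSdef]
    exact Finset.mem_image_of_mem _ (Finset.mem_univ z)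
  set σ0 : Fin m → Fin m :=
    fun z => (S.orderIsoOfFin hS).symm ⟨π (Fin.castLE hm z), hmemS z⟩ with hσ0
  have hσ0inj : Function.Injective σ0 := by
    intro a b hab
    rw [hσ0] at hab
    have := (S.orderIsoOfFin hS).symm.injective hab
    have := Subtype.ext_iff.mp this
    exact Fin.castLE_injective hm (π.injective this)
  have hσ0bij : Function.Bijective σ0 := Finite.injective_iff_bijective.mp hσ0inj
  set σ : Equiv.Perm (Fin m) := Equiv.ofBijective σ0 hσ0bij with hσdef
  have hσap : ∀ z : Fin m, (S.orderIsoOfFin hS) (σ z) = ⟨π (Fin.castLE hm z), hmemS z⟩ := by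
    intro z
    rw [hσdef]
    simp [Equiv.ofBijective_apply, hσ0]
  refine ⟨S, hS, σ, ?_⟩
  -- the tail function of π
  have hg : ∀ j : Fin (n - m), π ⟨m + (j : ℕ), by omega⟩ ∈ Sᶜ := by
    intro j
    rw [Finset.mem_compl]
    intro hmem
    simp only [hSdef, Finset.mem_image, Finset.mem_univ, true_and] at hmem
    obtain ⟨z, hz⟩ := hmem
    have := π.injective hz
    have := Fin.val_eq_val .. |>.mpr this
    simp [Fin.castLE] at this
    omega
  set g : Fin (n - m) → Fin n := fun j => π ⟨m + (j : ℕ), by omega⟩ with hgdef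
  have hgmono : StrictMono g := by
    apply strictMono_of_consec
    intro i hi
    rw [hgdef]
    simp only []
    have := htail (m + i) (by omega) (by omega)
    convert this using 3 <;> omega
  have hgeq : g = Sᶜ.orderEmbOfFin (compl_card hm hS) :=
    Finset.orderEmbOfFin_unique _ (fun j => hg j) hgmono
  apply Equiv.ext
  intro i
  rcases lt_or_ge (i : ℕ) m with hi | hi
  · rw [bp_apply_lt hm S hS σ i hi, hσap ⟨(i : ℕ), hi⟩]
    have : Fin.castLE hm (⟨(i : ℕ), hi⟩ : Fin m) = i := by
      ext; simp [Fin.castLE]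
    simp [this]
  · rw [bp_apply_ge hm S hS σ i hi]
    have h1 : (Sᶜ.orderIsoOfFin (compl_card hm hS) ⟨(i : ℕ) - m, by omega⟩ : Fin n)
        = Sᶜ.orderEmbOfFin (compl_card hm hS) ⟨(i : ℕ) - m, by omega⟩ := by
      rw [Finset.coe_orderIsoOfFin_apply]
    rw [h1, ← hgeq, hgdef]
    exact congrArg π (by ext; simp; omega)


lemma key {w : ℕ → Bool} {n m : ℕ} (hm1 : 1 ≤ m) (hmn : m < n) (hwm : w m = true)
    (hlarge : ∀ j, m < j → j < n → w j = false) :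
    n.choose m * dCount w m
      = dCount w n + dCount (Function.update w m false) n := by
  classical
  set w' := Function.update w m false with hw'
  have hww' : ∀ j, j ≠ m → w' j = w j := fun j hj => by
    rw [hw']; exact Function.update_of_ne hj _ _
  have hw'm : w' m = false := by rw [hw']; exact Function.update_self _ _ _
  have hmn' : m ≤ n := hmn.le
  have hm' : m - 1 + 1 = m := by omega
  -- every built permutation satisfies one of the two descent conditions
  have hbp : ∀ (S : Finset (Fin n)) (hS : S.card = m) (σ : Equiv.Perm (Fin m)),
      DC w m σ → (DC w n (bp hmn' S hS σ) ∨ DC w' n (bp hmn' S hS σ)) := by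
    intro S hS σ hσ
    set π := bp hmn' S hS σ with hπ
    have hcommon : ∀ i : ℕ, ∀ h : i + 1 < n, i + 1 ≠ m →
        (π ⟨i+1, h⟩ < π ⟨i, Nat.lt_of_succ_lt h⟩ ↔ w (i+1) = true) := by
      intro i h hne
      rcases lt_or_ge (i + 1) m with hlt | hge
      · rw [hπ, bp_lt_low hmn' S hS σ _ _ hlt (by simp; omega)]
        exact hσ i hlt
      · have hgt : m < i + 1 := by omega
        have hasc : π ⟨i, Nat.lt_of_succ_lt h⟩ < π ⟨i+1, h⟩ := by
          rw [hπ]; exact bp_lt_high hmn' S hS σ _ _ (by simp; omega) (by simp; omega)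
            (by simp)
        rw [hlarge (i+1) hgt h]
        simp only [Bool.false_eq_true, iff_false]
        exact asymm hasc
    by_cases hd : π ⟨m, hmn⟩ < π ⟨m - 1, by omega⟩
    · left
      intro i h
      rcases eq_or_ne (i+1) m with he | hne
      · have hi : i = m - 1 := by omega
        subst hi
        simp only [hm']
        rw [hwm]
        simp only [iff_true]
        exact hd
      · exact hcommon i h hne
    · right
      intro i h
      rcases eq_or_ne (i+1) m with he | hne
      · have hi : i = m - 1 := by omega
        subst hi
        simp only [hm']
        rw [hw'm]
        simp only [Bool.false_eq_true, iff_false]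
        exact hd
      · rw [hww' (i+1) hne]
        exact hcommon i h hne
  -- the bijection
  have Φbij : Function.Bijective
      (fun p : {S : Finset (Fin n) // S.card = m} × {σ : Equiv.Perm (Fin m) // DC w m σ} =>
        (⟨bp hmn' p.1.1 p.1.2 p.2.1, hbp p.1.1 p.1.2 p.2.1 p.2.2⟩ :
          {π : Equiv.Perm (Fin n) // DC w n π ∨ DC w' n π})) := by
    constructor
    · rintro ⟨⟨S, hS⟩, ⟨σ, hσc⟩⟩ ⟨⟨T, hT⟩, ⟨τ, hτc⟩⟩ hpq
      obtain ⟨h1, h2⟩ := bp_inj hmn' S T hS hT σ τ (Subtype.ext_iff.mp hpq)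
      subst h1
      subst h2
      rfl
    · rintro ⟨π, hor⟩
      have htail : ∀ i : ℕ, m ≤ i → ∀ h2 : i + 1 < n,
          π ⟨i, Nat.lt_of_succ_lt h2⟩ < π ⟨i+1, h2⟩ := by
        intro i hi h2
        have hne : π ⟨i, Nat.lt_of_succ_lt h2⟩ ≠ π ⟨i+1, h2⟩ := fun hc => by
          have := π.injective hc; simp [Fin.ext_iff] at this
        have hnd : ¬ (π ⟨i+1, h2⟩ < π ⟨i, Nat.lt_of_succ_lt h2⟩) := by
          rcases hor with hA | hB
          · have := hA i h2
            rw [hlarge (i+1) (by omega) h2] at this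
            simpa using this
          · have := hB i h2
            rw [hww' (i+1) (by omega), hlarge (i+1) (by omega) h2] at this
            simpa using this
        rcases lt_trichotomy (π ⟨i, Nat.lt_of_succ_lt h2⟩) (π ⟨i+1, h2⟩) with h | h | h
        · exact h
        · exact absurd h hne
        · exact absurd h hnd
      obtain ⟨S, hS, σ, hbpeq⟩ := bp_surj hmn' π htail
      have hσc : DC w m σ := by
        intro i hilt
        have hlt : i + 1 < n := by omega
        have hcond : π ⟨i+1, hlt⟩ < π ⟨i, Nat.lt_of_succ_lt hlt⟩ ↔ w (i+1) = true := by
          rcases hor with hA | hB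
          · exact hA i hlt
          · rw [← hww' (i+1) (by omega)]
            exact hB i hlt
        rw [← hbpeq,
          bp_lt_low hmn' S hS σ ⟨i+1, hlt⟩ ⟨i, Nat.lt_of_succ_lt hlt⟩ hilt
            (by simp; omega)] at hcond
        exact hcond
      exact ⟨⟨⟨S, hS⟩, ⟨σ, hσc⟩⟩, Subtype.ext hbpeq⟩
  -- disjointness of the two conditions
  have hdisj : Disjoint (DC w n) (DC w' n) := by
    intro r hr1 hr2 π hπ
    have hA : DC w n π := hr1 π hπ
    have hB : DC w' n π := hr2 π hπ
    have h1 := hA (m - 1) (by omega)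
    have h2 := hB (m - 1) (by omega)
    simp only [hm'] at h1 h2
    rw [hwm] at h1
    rw [hw'm] at h2
    simp only [iff_true, Bool.false_eq_true, iff_false] at h1 h2
    exact absurd h1 h2
  -- cardinality computation
  have hcard := Nat.card_eq_of_bijective _ Φbij
  rw [Nat.card_prod] at hcard
  have hc1 : Nat.card {S : Finset (Fin n) // S.card = m} = n.choose m := by
    rw [Nat.card_eq_fintype_card]
    simpa using Fintype.card_finset_len (α := Fin n) m
  have hc2 : Nat.card {π : Equiv.Perm (Fin n) // DC w n π ∨ DC w' n π}
      = dCount w n + dCount w' n := by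
    rw [Nat.card_congr (subtypeOrEquiv (DC w n) (DC w' n) hdisj), Nat.card_sum,
      dCount_eq, dCount_eq]
  rw [hc1, hc2, ← dCount_eq] at hcard
  exact hcard

end BP


lemma idx_lt {idx : ℕ → ℕ} {K : ℕ} (hmono : ∀ r, r < K → idx r < idx (r+1)) :
    ∀ r s, r < s → s ≤ K → idx r < idx s := by
  intro r s hrs hsK
  induction s with
  | zero => omega
  | succ t ih =>
    rcases Nat.lt_or_ge r t with h | h
    · exact (ih h (by omega)).trans (hmono t (by omega))
    · have hrt : r = t := by omega
      subst hrt
      exact hmono r (by omega)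

end Stmt4Aux

theorem stmt4 (w : ℕ → Bool) (n k : ℕ) (hn : 1 ≤ n) (idx : ℕ → ℕ)
    (h0 : idx 0 = 0)
    (hmono : ∀ r : ℕ, r < k → idx r < idx (r + 1))
    (hmem : ∀ r : ℕ, 1 ≤ r → r ≤ k → 1 ≤ idx r ∧ idx r ≤ n - 1 ∧ w (idx r) = true)
    (hall : ∀ j : ℕ, 1 ≤ j → j ≤ n - 1 → w j = true → ∃ r : ℕ, 1 ≤ r ∧ r ≤ k ∧ idx r = j) :
    (dCount w n : ℤ) =
      ∑ r ∈ Finset.range (k + 1),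
        (-1) ^ (k - r) * (n.choose (idx r) : ℤ) * (dCount w (idx r) : ℤ) := by
  classical
  induction k generalizing w with
  | zero =>
    have h1 : dCount w 0 = 1 := Stmt4Aux.dCount_one (by omega)
    have h2 : dCount w n = 1 := Stmt4Aux.dCount_one (fun j hj1 hj2 => by
      by_contra hc
      have hw : w j = true := by revert hc; cases w j <;> simp
      obtain ⟨r, hr1, hr2, _⟩ := hall j hj1 (by omega) hw
      omega)
    rw [h2, Finset.sum_range_one, h0, h1]
    simp
  | succ k ih =>
    obtain ⟨hm1, hm2, hwm⟩ := hmem (k+1) (by omega) le_rfl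
    set m := idx (k+1) with hmdef
    have hmn : m < n := by omega
    set w' := Function.update w m false with hw'def
    have hww' : ∀ j, j ≠ m → w' j = w j := fun j hj => by
      rw [hw'def]; exact Function.update_of_ne hj _ _
    have hw'm : w' m = false := by rw [hw'def]; exact Function.update_self _ _ _
    have hidxlt : ∀ r, r ≤ k → idx r < m := fun r hr =>
      Stmt4Aux.idx_lt hmono r (k+1) (by omega) le_rfl
    have hlarge : ∀ j, m < j → j < n → w j = false := by
      intro j hj1 hj2
      by_contra hc
      have hw : w j = true := by revert hc; cases w j <;> simp
      obtain ⟨r, hr1, hr2, hr3⟩ := hall j (by omega) (by omega) hw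
      rcases Nat.lt_or_ge r (k+1) with h | h
      · have := hidxlt r (by omega); omega
      · have hrk : r = k + 1 := by omega
        subst hrk
        omega
    have hkey := Stmt4Aux.key (w := w) hm1 hmn hwm hlarge
    rw [← hw'def] at hkey
    have ih' := ih w'
      (fun r hr => hmono r (by omega))
      (fun r h1 h2 => by
        have h3 := hmem r h1 (by omega)
        refine ⟨h3.1, h3.2.1, ?_⟩
        rw [hww' (idx r) (by have := hidxlt r h2; omega)]
        exact h3.2.2)
      (fun j h1 h2 hw'j => by
        have hjm : j ≠ m := fun he => by
          rw [he, hw'm] at hw'j; simp at hw'j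
        have hwj : w j = true := by rw [← hww' j hjm]; exact hw'j
        obtain ⟨r, hr1, hr2, hr3⟩ := hall j h1 h2 hwj
        refine ⟨r, hr1, ?_, hr3⟩
        rcases Nat.lt_or_ge r (k+1) with h | h
        · omega
        · exfalso
          have hrk : r = k + 1 := by omega
          subst hrk
          exact hjm (hr3 ▸ hmdef))
    have hdc : ∀ r, r ≤ k → dCount w' (idx r) = dCount w (idx r) := by
      intro r hr
      apply Stmt4Aux.dCount_congr
      intro j hj1 hj2
      apply hww'
      have := hidxlt r hr
      omega
    have ih'' : (dCount w' n : ℤ) = ∑ r ∈ Finset.range (k + 1),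
        (-1) ^ (k - r) * (n.choose (idx r) : ℤ) * (dCount w (idx r) : ℤ) := by
      rw [ih']
      apply Finset.sum_congr rfl
      intro r hr
      rw [hdc r (Nat.lt_succ_iff.mp (Finset.mem_range.mp hr))]
    have hkeyZ : (n.choose m : ℤ) * (dCount w m : ℤ)
        = (dCount w n : ℤ) + (dCount w' n : ℤ) := by
      exact_mod_cast congrArg (Nat.cast (R := ℤ)) hkey
    rw [Finset.sum_range_succ, ← hmdef]
    have hsum : ∑ r ∈ Finset.range (k+1),
        (-1:ℤ)^(k+1-r) * (n.choose (idx r) : ℤ) * (dCount w (idx r) : ℤ)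
        = - ∑ r ∈ Finset.range (k+1),
            (-1:ℤ)^(k-r) * (n.choose (idx r) : ℤ) * (dCount w (idx r) : ℤ) := by
      rw [← Finset.sum_neg_distrib]
      apply Finset.sum_congr rfl
      intro r hr
      have hrk : r < k + 1 := Finset.mem_range.mp hr
      have he : k + 1 - r = (k - r) + 1 := by omega
      rw [he, pow_succ]
      ring
    rw [hsum, ← ih'']
    have hz : k + 1 - (k + 1) = 0 := by omega
    rw [hz, pow_zero, one_mul]
    linarith [hkeyZ]
end

section
/- Let n, k ≥ 1 and let u be a binary word of length n−1. Then d_{n+k}(u 0^k) ≤ C(n+k, k) · d_n(u), where u 0^k denotes the word u followed by k letters 0, and C(n+k, k) is the binomial coefficient. -/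
theorem stmt6 (n k : ℕ) (hn : 1 ≤ n) (hk : 1 ≤ k) (u : List Bool)
    (hu : u.length = n - 1) :
    dCountL (u ++ List.replicate k false) ≤ (n + k).choose k * dCountL u := by
  classical
  obtain ⟨m, rfl⟩ : ∃ m, n = m + 1 := ⟨n - 1, by omega⟩
  obtain ⟨K, rfl⟩ : ∃ K, k = K + 1 := ⟨k - 1, by omega⟩
  simp only [Nat.add_sub_cancel] at hu
  subst hu
  set m := u.length with hm
  set L := u ++ List.replicate (K + 1) false with hLdef
  have hL : L.length = m + (K + 1) := by simp [hLdef]; rfl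
  -- total size
  have hM : L.length + 1 = m + 1 + (K + 1) := by omega
  -- embeddings of first m+1 and last K+1 positions
  set A : Fin (m + 1) → Fin (L.length + 1) := fun j => ⟨j.val, by omega⟩ with hA
  set B : Fin (K + 1) → Fin (L.length + 1) := fun j => ⟨m + 1 + j.val, by omega⟩ with hB
  have hAB : ∀ j j', A j ≠ B j' := by
    intro j j' h
    have := congrArg Fin.val h
    simp only [hA, hB] at this
    omega
  -- the source and target subtypes
  set P : Equiv.Perm (Fin (L.length + 1)) → Prop :=
    fun π => ∀ i : Fin L.length, (π i.succ < π i.castSucc ↔ L.get i = true) with hP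
  set Q : Equiv.Perm (Fin (m + 1)) → Prop :=
    fun σ => ∀ i : Fin m, (σ i.succ < σ i.castSucc ↔ u.get i = true) with hQ
  -- values of L
  have hget_low : ∀ (i : Fin L.length) (h : i.val < m), L.get i = u.get ⟨i.val, h⟩ := by
    intro i h
    simp only [hLdef, List.get_eq_getElem]
    exact List.getElem_append_left h
  have hget_high : ∀ (i : Fin L.length), m ≤ i.val → L.get i = false := by
    intro i h
    have hi : i.val < m + (K + 1) := by have := i.isLt; omega
    simp only [hLdef, List.get_eq_getElem]
    rw [List.getElem_append_right (by omega)]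
    simp
  -- main construction
  have hmonoB : ∀ (π : Equiv.Perm (Fin (L.length + 1))), P π → StrictMono (fun j => π (B j)) := by
    intro π hπ
    rw [Fin.strictMono_iff_lt_succ]
    intro j
    have hjv : (m + 1 + j.val) < L.length := by have := j.isLt; omega
    set i : Fin L.length := ⟨m + 1 + j.val, hjv⟩ with hi
    have h1 : ¬ (π i.succ < π i.castSucc) := by
      rw [hπ i, hget_high i (by simp [hi]; omega)]
      simp
    have h2 : π i.castSucc ≠ π i.succ := by
      intro h
      have := π.injective h
      have := congrArg Fin.val this
      simp [Fin.succ, Fin.castSucc, Fin.castAdd, Fin.castLE] at this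
    have hle : π i.castSucc < π i.succ := lt_of_le_of_ne (not_lt.mp h1) h2
    have e1 : i.castSucc = B j.castSucc := by
      apply Fin.ext; simp [hi, hB]
    have e2 : i.succ = B j.succ := by
      apply Fin.ext; simp [hi, hB]; omega
    rw [e1, e2] at hle
    exact hle
  -- the finset of values on the last K+1 positions
  set Tof : Equiv.Perm (Fin (L.length + 1)) → Finset (Fin (L.length + 1)) :=
    fun π => Finset.image (fun j => π (B j)) Finset.univ with hTof
  have hTcard : ∀ (π : Equiv.Perm (Fin (L.length + 1))), P π → (Tof π).card = K + 1 := by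
    intro π hπ
    rw [hTof]
    rw [Finset.card_image_of_injective _ ((hmonoB π hπ).injective)]
    simp
  have hScard : ∀ (π : Equiv.Perm (Fin (L.length + 1))), P π → (Tof π)ᶜ.card = m + 1 := by
    intro π hπ
    rw [Finset.card_compl, hTcard π hπ]
    simp; omega
  have hmemS : ∀ (π : Equiv.Perm (Fin (L.length + 1))), ∀ j : Fin (m + 1),
      π (A j) ∈ (Tof π)ᶜ := by
    intro π j
    simp only [Finset.mem_compl, hTof, Finset.mem_image]
    rintro ⟨j', -, h⟩
    exact hAB j j' (π.injective h).symm
  -- standardization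
  set E : ∀ (π : Equiv.Perm (Fin (L.length + 1))), P π → (Fin (m + 1) ≃o ((Tof π)ᶜ : Finset _)) :=
    fun π hπ => (Tof π)ᶜ.orderIsoOfFin (hScard π hπ) with hE
  set sig0 : ∀ (π : Equiv.Perm (Fin (L.length + 1))), P π → (Fin (m + 1) → Fin (m + 1)) :=
    fun π hπ j => (E π hπ).symm ⟨π (A j), hmemS π j⟩ with hsig0
  have hsiginj : ∀ π hπ, Function.Injective (sig0 π hπ) := by
    intro π hπ j j' h
    simp only [hsig0] at h
    have := (E π hπ).symm.injective h
    have := Subtype.ext_iff.mp this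
    have := π.injective this
    have := congrArg Fin.val this
    simp only [hA] at this
    exact Fin.ext this
  set sig : ∀ (π : Equiv.Perm (Fin (L.length + 1))), P π → Equiv.Perm (Fin (m + 1)) :=
    fun π hπ => Equiv.ofBijective _ (Finite.injective_iff_bijective.mp (hsiginj π hπ)) with hsig
  have hsig_apply : ∀ π hπ j, sig π hπ j = sig0 π hπ j := fun _ _ _ => rfl
  have hsig_lt : ∀ π hπ (j j' : Fin (m + 1)),
      (sig π hπ j < sig π hπ j' ↔ π (A j) < π (A j')) := by
    intro π hπ j j'
    rw [hsig_apply π hπ j, hsig_apply π hπ j', hsig0]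
    rw [OrderIso.lt_iff_lt]
    exact Subtype.mk_lt_mk
  have hQsig : ∀ π hπ, Q (sig π hπ) := by
    intro π hπ i
    have hiv : (i.val : ℕ) < L.length := by have := i.isLt; omega
    set i' : Fin L.length := ⟨i.val, hiv⟩ with hi'
    have e1 : A i.castSucc = i'.castSucc := by apply Fin.ext; simp [hA, hi']
    have e2 : A i.succ = i'.succ := by apply Fin.ext; simp [hA, hi']
    show sig π hπ i.succ < sig π hπ i.castSucc ↔ u.get i = true
    rw [hsig_lt π hπ, e2, e1, hπ i', hget_low i' (by simp [hi'])]
  -- the injection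
  set Φ : {π : Equiv.Perm (Fin (L.length + 1)) // P π} →
      {s : Finset (Fin (L.length + 1)) // s.card = K + 1} × {σ : Equiv.Perm (Fin (m + 1)) // Q σ} :=
    fun π => (⟨Tof π.1, hTcard π.1 π.2⟩, ⟨sig π.1 π.2, hQsig π.1 π.2⟩) with hΦ
  have emb_congr : ∀ {c : ℕ} (s t : Finset (Fin (L.length + 1))) (hs' : s.card = c)
      (ht : t.card = c), s = t → ∀ i, s.orderEmbOfFin hs' i = t.orderEmbOfFin ht i := by
    rintro c s t hs' ht rfl i; rfl
  have hBval : ∀ (π : Equiv.Perm (Fin (L.length + 1))) (hπ : P π) (j : Fin (K + 1)),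
      π (B j) = (Tof π).orderEmbOfFin (hTcard π hπ) j := by
    intro π hπ j
    have e1 := Finset.orderEmbOfFin_unique (hTcard π hπ)
      (f := fun j => π (B j)) (fun x => by simp [hTof]) (hmonoB π hπ)
    exact congrFun e1 j
  have hAval : ∀ (π : Equiv.Perm (Fin (L.length + 1))) (hπ : P π) (j : Fin (m + 1)),
      π (A j) = ((Tof π)ᶜ).orderEmbOfFin (hScard π hπ) (sig π hπ j) := by
    intro π hπ j
    rw [hsig_apply π hπ j, hsig0]
    simp only [hE]
    rw [← Finset.coe_orderIsoOfFin_apply, OrderIso.apply_symm_apply]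
  have hΦinj : Function.Injective Φ := by
    rintro ⟨π₁, hπ₁⟩ ⟨π₂, hπ₂⟩ h
    simp only [hΦ, Prod.mk.injEq, Subtype.mk.injEq] at h
    obtain ⟨hT, hs⟩ := h
    have hA1 : ∀ j : Fin (m + 1), π₁ (A j) = π₂ (A j) := by
      intro j
      rw [hAval π₁ hπ₁ j, hAval π₂ hπ₂ j, hs]
      exact emb_congr _ _ _ _ (by rw [hT]) _
    have hB1 : ∀ j : Fin (K + 1), π₁ (B j) = π₂ (B j) := by
      intro j
      rw [hBval π₁ hπ₁ j, hBval π₂ hπ₂ j]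
      exact emb_congr _ _ _ _ hT _
    apply Subtype.ext
    apply Equiv.ext
    intro x
    by_cases hx : x.val < m + 1
    · have : x = A ⟨x.val, hx⟩ := by apply Fin.ext; simp [hA]
      rw [this]; exact hA1 _
    · have : x = B ⟨x.val - (m + 1), by have := x.isLt; omega⟩ := by
        apply Fin.ext; simp [hB]; omega
      rw [this]; exact hB1 _
  have h1 : dCountL L = Nat.card {π : Equiv.Perm (Fin (L.length + 1)) // P π} := rfl
  have h2 : dCountL u = Nat.card {σ : Equiv.Perm (Fin (m + 1)) // Q σ} := rfl
  rw [h1, h2]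
  have h3 : Nat.card {s : Finset (Fin (L.length + 1)) // s.card = K + 1} =
      (m + 1 + (K + 1)).choose (K + 1) := by
    rw [Nat.card_eq_fintype_card, Fintype.card_finset_len, Fintype.card_fin, hM]
  calc Nat.card {π : Equiv.Perm (Fin (L.length + 1)) // P π}
      ≤ Nat.card ({s : Finset (Fin (L.length + 1)) // s.card = K + 1} ×
          {σ : Equiv.Perm (Fin (m + 1)) // Q σ}) :=
        Nat.card_le_card_of_injective Φ hΦinj
    _ = _ := by rw [Nat.card_prod, h3]
end

section
/- For every infinite binary word w and every integer n ≥ 1, (1/n) · d_n(w) ≤ d_n(Σ(w)) ≤ n · d_n(w), where Σ(w) is the shift of w, i.e., the word whose i-th letter is w_{i+1}. -/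
open Filter

section aux

/-- `mu true m` sends `m` to the top, preserving relative order of the rest;
`mu false m` sends `m` to the bottom. -/
def mu {N : ℕ} (b : Bool) (m : Fin (N + 1)) : Equiv.Perm (Fin (N + 1)) :=
  if b then Fin.revPerm * Fin.cycleRange m.rev * Fin.revPerm else Fin.cycleRange m

lemma cr_mono {N : ℕ} {m x y : Fin (N + 1)} (hx : x ≠ m) (hy : y ≠ m) (h : x < y) :
    m.cycleRange x < m.cycleRange y := by
  rcases lt_trichotomy y m with hy' | hy' | hy'
  · have hx' : x < m := h.trans hy'
    rw [Fin.lt_def, Fin.coe_cycleRange_of_lt hx', Fin.coe_cycleRange_of_lt hy']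
    exact Nat.succ_lt_succ h
  · exact absurd hy' hy
  · rcases lt_trichotomy x m with hx' | hx' | hx'
    · rw [Fin.cycleRange_of_gt hy', Fin.lt_def, Fin.coe_cycleRange_of_lt hx']
      have h1 := Fin.lt_def.mp hx'
      have h2 := Fin.lt_def.mp hy'
      omega
    · exact absurd hx' hx
    · rw [Fin.cycleRange_of_gt hy', Fin.cycleRange_of_gt hx']
      exact h

lemma mu_mono {N : ℕ} (b : Bool) {m x y : Fin (N + 1)} (hx : x ≠ m) (hy : y ≠ m)
    (h : x < y) : mu b m x < mu b m y := by
  cases b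
  · exact cr_mono hx hy h
  · simp only [mu, if_pos, Equiv.Perm.mul_apply, Fin.revPerm_apply]
    rw [Fin.rev_lt_rev]
    exact cr_mono (fun e => hy (Fin.rev_injective e)) (fun e => hx (Fin.rev_injective e))
      (Fin.rev_lt_rev.mpr h)

lemma mu_lt_iff {N : ℕ} (b : Bool) {m x y : Fin (N + 1)} (hx : x ≠ m) (hy : y ≠ m) :
    mu b m x < mu b m y ↔ x < y := by
  constructor
  · intro hc
    rcases lt_trichotomy x y with h | h | h
    · exact h
    · subst h; exact absurd hc (lt_irrefl _)
    · exact absurd (mu_mono b hy hx h) (asymm hc)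
  · exact mu_mono b hx hy

lemma mu_apply_self {N : ℕ} (b : Bool) (m : Fin (N + 1)) :
    mu b m m = if b then Fin.last N else 0 := by
  cases b
  · simpa [mu] using Fin.cycleRange_self m
  · simp [mu, Equiv.Perm.mul_apply]

lemma mu_lt_self_iff {N : ℕ} (b : Bool) {m x : Fin (N + 1)} (hx : x ≠ m) :
    mu b m x < mu b m m ↔ b = true := by
  have hne : mu b m x ≠ mu b m m := fun e => hx (Equiv.injective _ e)
  cases b
  · rw [mu_apply_self]
    simp
  · rw [mu_apply_self]
    simp only [if_pos]
    simp only [iff_true]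
    exact lt_of_le_of_ne (Fin.le_last _) (by simpa [mu_apply_self] using hne)

lemma self_lt_mu_iff {N : ℕ} (b : Bool) {m x : Fin (N + 1)} (hx : x ≠ m) :
    mu b m m < mu b m x ↔ b = false := by
  have hne : mu b m x ≠ mu b m m := fun e => hx (Equiv.injective _ e)
  have h1 := mu_lt_self_iff b hx
  cases b
  · simp only [iff_true]
    rcases lt_trichotomy (mu false m m) (mu false m x) with h | h | h
    · exact h
    · exact absurd h.symm hne
    · simp only [Bool.false_eq_true, iff_false] at h1; exact absurd h h1
  · simp only [Bool.true_eq_false, iff_false, not_lt]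
    exact (h1.mpr rfl).le

lemma key1 (w : ℕ → Bool) (N : ℕ) :
    dCount (fun i => w (i + 1)) (N + 1) ≤ (N + 1) * dCount w (N + 1) := by
  classical
  set A := {π : Equiv.Perm (Fin (N + 1)) //
    ∀ i : ℕ, ∀ h : i + 1 < N + 1,
      (π ⟨i + 1, h⟩ < π ⟨i, Nat.lt_of_succ_lt h⟩ ↔ (fun i => w (i + 1)) (i + 1) = true)} with hA
  set B := {π : Equiv.Perm (Fin (N + 1)) //
    ∀ i : ℕ, ∀ h : i + 1 < N + 1,
      (π ⟨i + 1, h⟩ < π ⟨i, Nat.lt_of_succ_lt h⟩ ↔ w (i + 1) = true)} with hB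
  have hr : ∀ (i : ℕ) (h : i < N),
      (finRotate (N + 1))⁻¹ ⟨i + 1, Nat.succ_lt_succ h⟩ = ⟨i, h.trans (Nat.lt_succ_self N)⟩ := by
    intro i h
    have := finRotate_of_lt (n := N) h
    rw [show (⟨i, h.trans_le N.le_succ⟩ : Fin (N+1)) = ⟨i, h.trans (Nat.lt_succ_self N)⟩ from rfl]
      at this
    rw [← this, Equiv.Perm.inv_def, Equiv.symm_apply_apply]
  have hr0 : (finRotate (N + 1))⁻¹ 0 = Fin.last N := by
    rw [← finRotate_last, Equiv.Perm.inv_def, Equiv.symm_apply_apply]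
  have hmem : ∀ π : A, ∀ i : ℕ, ∀ h : i + 1 < N + 1,
      ((mu (w 1) (π.1 (Fin.last N)) * π.1 * (finRotate (N + 1))⁻¹) ⟨i + 1, h⟩ <
        (mu (w 1) (π.1 (Fin.last N)) * π.1 * (finRotate (N + 1))⁻¹) ⟨i, Nat.lt_of_succ_lt h⟩ ↔
        w (i + 1) = true) := by
    rintro ⟨π, hπ⟩ i h
    have hi : i < N := Nat.lt_of_succ_lt_succ h
    simp only [Equiv.Perm.mul_apply]
    rw [hr i hi]
    cases i with
    | zero =>
        rw [show (⟨0, Nat.lt_of_succ_lt h⟩ : Fin (N+1)) = 0 from rfl, hr0]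
        have hne : π ⟨0, Nat.lt_succ_of_lt hi⟩ ≠ π (Fin.last N) := by
          intro e
          have := π.injective e
          have : (0 : ℕ) = N := congrArg Fin.val this
          omega
        exact mu_lt_self_iff (w 1) hne
    | succ j =>
        have hj : j < N := Nat.lt_of_succ_lt hi
        rw [hr j hj]
        have hlast : ∀ k : ℕ, ∀ hk : k < N, π ⟨k, hk.trans (Nat.lt_succ_self N)⟩ ≠
            π (Fin.last N) := by
          intro k hk e
          have := π.injective e
          have : k = N := congrArg Fin.val this
          omega
        rw [mu_lt_iff (w 1) (hlast _ hi) (hlast _ hj)]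
        exact hπ j (Nat.lt_of_succ_lt h)
  let f : A → B × Fin (N + 1) := fun π =>
    (⟨mu (w 1) (π.1 (Fin.last N)) * π.1 * (finRotate (N + 1))⁻¹, hmem π⟩, π.1 (Fin.last N))
  have hf : Function.Injective f := by
    rintro ⟨π, hπ⟩ ⟨π', hπ'⟩ he
    have h2 : π (Fin.last N) = π' (Fin.last N) := congrArg Prod.snd he
    have h1 : mu (w 1) (π (Fin.last N)) * π * (finRotate (N + 1))⁻¹ =
        mu (w 1) (π' (Fin.last N)) * π' * (finRotate (N + 1))⁻¹ :=
      congrArg (fun p => (p.1 : Equiv.Perm (Fin (N+1)))) he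
    rw [h2] at h1
    have := mul_right_cancel h1
    have := mul_left_cancel this
    exact Subtype.ext this
  calc dCount (fun i => w (i + 1)) (N + 1) = Nat.card A := rfl
    _ ≤ Nat.card (B × Fin (N + 1)) := Nat.card_le_card_of_injective f hf
    _ = Nat.card B * (N + 1) := by rw [Nat.card_prod]; simp
    _ = (N + 1) * dCount w (N + 1) := by rw [mul_comm]; rfl

lemma key2 (w : ℕ → Bool) (N : ℕ) :
    dCount w (N + 1) ≤ (N + 1) * dCount (fun i => w (i + 1)) (N + 1) := by
  classical
  set A := {π : Equiv.Perm (Fin (N + 1)) //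
    ∀ i : ℕ, ∀ h : i + 1 < N + 1,
      (π ⟨i + 1, h⟩ < π ⟨i, Nat.lt_of_succ_lt h⟩ ↔ (fun i => w (i + 1)) (i + 1) = true)} with hA
  set B := {π : Equiv.Perm (Fin (N + 1)) //
    ∀ i : ℕ, ∀ h : i + 1 < N + 1,
      (π ⟨i + 1, h⟩ < π ⟨i, Nat.lt_of_succ_lt h⟩ ↔ w (i + 1) = true)} with hB
  have hr : ∀ (i : ℕ) (h : i < N),
      finRotate (N + 1) ⟨i, h.trans (Nat.lt_succ_self N)⟩ = ⟨i + 1, Nat.succ_lt_succ h⟩ :=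
    fun i h => finRotate_of_lt h
  have hrlast : finRotate (N + 1) (Fin.last N) = 0 := finRotate_last
  have hmem : ∀ σ : B, ∀ i : ℕ, ∀ h : i + 1 < N + 1,
      ((mu (!(w (N + 1))) (σ.1 0) * σ.1 * finRotate (N + 1)) ⟨i + 1, h⟩ <
        (mu (!(w (N + 1))) (σ.1 0) * σ.1 * finRotate (N + 1)) ⟨i, Nat.lt_of_succ_lt h⟩ ↔
        (fun i => w (i + 1)) (i + 1) = true) := by
    rintro ⟨σ, hσ⟩ i h
    have hi : i < N := Nat.lt_of_succ_lt_succ h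
    simp only [Equiv.Perm.mul_apply]
    rw [show (⟨i, Nat.lt_of_succ_lt h⟩ : Fin (N+1)) = ⟨i, hi.trans (Nat.lt_succ_self N)⟩ from rfl,
      hr i hi]
    have hne0 : ∀ k : ℕ, ∀ hk : k + 1 < N + 1, σ ⟨k + 1, hk⟩ ≠ σ 0 := by
      intro k hk e
      have := σ.injective e
      have : k + 1 = 0 := congrArg Fin.val this
      omega
    rcases Nat.lt_or_ge (i + 1) N with hi1 | hi1
    · rw [show (⟨i + 1, h⟩ : Fin (N+1)) = ⟨i + 1, hi1.trans (Nat.lt_succ_self N)⟩ from rfl,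
        hr (i + 1) hi1]
      rw [mu_lt_iff _ (hne0 (i + 1) (Nat.succ_lt_succ hi1)) (hne0 i h)]
      exact hσ (i + 1) (Nat.succ_lt_succ hi1)
    · have hiN : i + 1 = N := le_antisymm hi hi1
      rw [show (⟨i + 1, h⟩ : Fin (N+1)) = Fin.last N from Fin.ext hiN, hrlast]
      rw [show w (i + 1 + 1) = w (N + 1) from by rw [hiN]]
      have hneL : σ (Fin.last N) ≠ σ 0 := by
        intro e
        have h0 := congrArg Fin.val (σ.injective e)
        simp only [Fin.val_last, Fin.val_zero] at h0
        omega
      rw [self_lt_mu_iff (!(w (N + 1))) hneL]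
      cases w (N + 1) <;> simp
  let f : B → A × Fin (N + 1) := fun σ =>
    (⟨mu (!(w (N + 1))) (σ.1 0) * σ.1 * finRotate (N + 1), hmem σ⟩, σ.1 0)
  have hf : Function.Injective f := by
    rintro ⟨σ, hσ⟩ ⟨σ', hσ'⟩ he
    have h2 : σ 0 = σ' 0 := congrArg Prod.snd he
    have h1 : mu (!(w (N + 1))) (σ 0) * σ * finRotate (N + 1) =
        mu (!(w (N + 1))) (σ' 0) * σ' * finRotate (N + 1) :=
      congrArg (fun p => (p.1 : Equiv.Perm (Fin (N+1)))) he
    rw [h2] at h1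
    have := mul_right_cancel h1
    have := mul_left_cancel this
    exact Subtype.ext this
  calc dCount w (N + 1) = Nat.card B := rfl
    _ ≤ Nat.card (A × Fin (N + 1)) := Nat.card_le_card_of_injective f hf
    _ = Nat.card A * (N + 1) := by rw [Nat.card_prod]; simp
    _ = (N + 1) * dCount (fun i => w (i + 1)) (N + 1) := by rw [mul_comm]; rfl

end aux

theorem stmt8 (w : ℕ → Bool) (n : ℕ) (hn : 1 ≤ n) :
    (1 / (n : ℝ)) * (dCount w n : ℝ) ≤ (dCount (fun i => w (i + 1)) n : ℝ) ∧
      (dCount (fun i => w (i + 1)) n : ℝ) ≤ (n : ℝ) * (dCount w n : ℝ) := by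
  obtain ⟨N, rfl⟩ : ∃ N, n = N + 1 := ⟨n - 1, by omega⟩
  have h1 := key1 w N
  have h2 := key2 w N
  have hpos : (0 : ℝ) < (N + 1 : ℕ) := by positivity
  constructor
  · rw [one_div, inv_mul_le_iff₀ hpos]
    exact_mod_cast h2
  · calc (dCount (fun i => w (i + 1)) (N + 1) : ℝ) ≤ ((N + 1) * dCount w (N + 1) : ℕ) := by
          exact_mod_cast h1
      _ = ((N + 1 : ℕ) : ℝ) * (dCount w (N + 1) : ℝ) := by push_cast; ring
end

section
/- Let w and w' be infinite binary words, and suppose there exist nonnegative integers m, m' such that w_{m+i} = w'_{m'+i} for all i ≥ 1 (i.e., w and w' have a common tail after deleting m and m' initial letters respectively). Then limsup_{n→∞} (d_n(w)/n!)^{1/n} = limsup_{n→∞} (d_n(w')/n!)^{1/n} and liminf_{n→∞} (d_n(w)/n!)^{1/n} = liminf_{n→∞} (d_n(w')/n!)^{1/n}. -/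
open Filter Equiv Topology

abbrev DSet (w : ℕ → Bool) (n : ℕ) :=
  {π : Equiv.Perm (Fin n) //
    ∀ i : ℕ, ∀ h : i + 1 < n,
      (π ⟨i + 1, h⟩ < π ⟨i, Nat.lt_of_succ_lt h⟩ ↔ w (i + 1) = true)}

lemma dCount_eq (w : ℕ → Bool) (n : ℕ) : dCount w n = Nat.card (DSet w n) := rfl

/-- upper bound injection -/
lemma dCount_succ_le (w : ℕ → Bool) (n : ℕ) :
    dCount w (n + 1) ≤ (n + 1) * dCount (fun i => w (i + 1)) n := by
  rw [dCount_eq, dCount_eq]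
  have key : ∀ π : DSet w (n+1), ∃ p : Fin (n+1) × DSet (fun i => w (i+1)) n,
      p.1 = (π : Perm (Fin (n+1))) 0 ∧
      ∀ i : Fin n, Fin.succAbove p.1 ((p.2 : Perm (Fin n)) i) = (π : Perm (Fin (n+1))) i.succ := by
    rintro ⟨π, hπ⟩
    set v : Fin (n+1) := π 0 with hv
    have hne : ∀ i : Fin n, π i.succ ≠ v := fun i hi =>
      (Fin.succ_ne_zero i) (π.injective hi)
    set f : Fin n → Fin n := fun i => (finSuccAboveEquiv v).symm ⟨π i.succ, hne i⟩ with hf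
    have hfa : ∀ i, Fin.succAbove v (f i) = π i.succ := by
      intro i
      have h1 : (finSuccAboveEquiv v) (f i) = ⟨π i.succ, hne i⟩ :=
        (finSuccAboveEquiv v).apply_symm_apply _
      have h2 := congrArg Subtype.val h1
      rw [finSuccAboveEquiv_apply] at h2
      exact h2
    have hinj : Function.Injective f := by
      intro a b hab
      have : Fin.succAbove v (f a) = Fin.succAbove v (f b) := by rw [hab]
      rw [hfa, hfa] at this
      exact Fin.succ_injective _ (π.injective this)
    have hbij := Finite.injective_iff_bijective.mp hinj
    set σ : Perm (Fin n) := Equiv.ofBijective f hbij with hσ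
    have hσa : ∀ i, σ i = f i := fun i => rfl
    have hlt : ∀ i j : Fin n, σ i < σ j ↔ π i.succ < π j.succ := by
      intro i j
      rw [hσa, hσa, ← Fin.succAbove_lt_succAbove_iff (p := v), hfa, hfa]
    have hcond : ∀ i : ℕ, ∀ h : i + 1 < n,
        (σ ⟨i + 1, h⟩ < σ ⟨i, Nat.lt_of_succ_lt h⟩ ↔ (fun i => w (i+1)) (i + 1) = true) := by
      intro i h
      rw [hlt]
      have h2 : (i+1) + 1 < n + 1 := Nat.succ_lt_succ h
      have := hπ (i+1) h2
      simpa [Fin.succ_mk] using this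
    exact ⟨(v, ⟨σ, hcond⟩), rfl, fun i => by simpa [hσa] using hfa i⟩
  choose Φ hΦ1 hΦ2 using key
  have hinj : Function.Injective Φ := by
    intro π π' hp
    have h1 : (π : Perm (Fin (n+1))) 0 = (π' : Perm (Fin (n+1))) 0 := by
      rw [← hΦ1 π, ← hΦ1 π', hp]
    have h2 : ∀ i : Fin n, (π : Perm (Fin (n+1))) i.succ = (π' : Perm (Fin (n+1))) i.succ := by
      intro i
      rw [← hΦ2 π i, ← hΦ2 π' i, hp]
    exact Subtype.ext (Equiv.ext fun x => Fin.cases h1 h2 x)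
  calc Nat.card (DSet w (n+1)) ≤ Nat.card (Fin (n+1) × DSet (fun i => w (i+1)) n) :=
        Nat.card_le_card_of_injective Φ hinj
    _ = (n+1) * Nat.card (DSet (fun i => w (i+1)) n) := by
        rw [Nat.card_prod, Nat.card_eq_fintype_card, Fintype.card_fin]

/-- lower bound injection -/
lemma le_dCount_succ (w : ℕ → Bool) (n : ℕ) :
    dCount (fun i => w (i + 1)) n ≤ dCount w (n + 1) := by
  rw [dCount_eq, dCount_eq]
  have key : ∀ σ : DSet (fun i => w (i+1)) n, ∃ π : DSet w (n+1),
      ∀ i : Fin n, (π : Perm (Fin (n+1))) i.succ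
        = Fin.succAbove (if w 1 then Fin.last n else 0) ((σ : Perm (Fin n)) i) := by
    rintro ⟨σ, hσ⟩
    set v : Fin (n+1) := if w 1 then Fin.last n else 0 with hv
    set g : Fin (n+1) → Fin (n+1) := Fin.cases v (fun i => Fin.succAbove v (σ i)) with hg
    have hg0 : g 0 = v := rfl
    have hgs : ∀ i : Fin n, g i.succ = Fin.succAbove v (σ i) := fun i => by simp [hg]
    have hinj : Function.Injective g := by
      intro a b
      refine Fin.cases ?_ (fun a' => ?_) a <;> refine Fin.cases ?_ (fun b' => ?_) b <;>
        intro hab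
      · rfl
      · rw [hg0, hgs] at hab
        exact absurd hab.symm (Fin.succAbove_ne v _)
      · rw [hg0, hgs] at hab
        exact absurd hab (Fin.succAbove_ne v _)
      · rw [hgs, hgs] at hab
        exact congrArg Fin.succ (σ.injective (Fin.succAbove_right_injective hab))
    have hbij := Finite.injective_iff_bijective.mp hinj
    set π : Perm (Fin (n+1)) := Equiv.ofBijective g hbij with hπd
    have hπa : ∀ x, π x = g x := fun x => rfl
    have hcond : ∀ i : ℕ, ∀ h : i + 1 < n + 1,
        (π ⟨i + 1, h⟩ < π ⟨i, Nat.lt_of_succ_lt h⟩ ↔ w (i + 1) = true) := by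
      intro i h
      match i with
      | 0 =>
        have hn : 0 < n := Nat.lt_of_succ_lt_succ h
        have e1 : (⟨1, h⟩ : Fin (n+1)) = (⟨0, hn⟩ : Fin n).succ := rfl
        have e0 : (⟨0, Nat.lt_of_succ_lt h⟩ : Fin (n+1)) = 0 := rfl
        rw [hπa, hπa, e1, e0, hgs, hg0]
        by_cases hw : w 1
        · simp only [hv, if_pos hw, hw]
          simp [Fin.succAbove_last, Fin.castSucc_lt_last]
        · simp only [hv, if_neg hw]
          simp [Fin.succAbove_zero, Fin.succ_pos, hw]
      | Nat.succ j =>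
        have hj : j + 1 < n := Nat.lt_of_succ_lt_succ h
        have e1 : (⟨j+2, h⟩ : Fin (n+1)) = (⟨j+1, hj⟩ : Fin n).succ := rfl
        have e0 : (⟨j+1, Nat.lt_of_succ_lt h⟩ : Fin (n+1)) = (⟨j, Nat.lt_of_succ_lt hj⟩ : Fin n).succ := rfl
        rw [hπa, hπa, e1, e0, hgs, hgs, Fin.succAbove_lt_succAbove_iff]
        exact hσ j hj
    exact ⟨⟨π, hcond⟩, fun i => by rw [hπa, hgs]⟩
  choose Ψ hΨ using key
  have hinj : Function.Injective Ψ := by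
    intro σ σ' hs
    have : ∀ i : Fin n, (σ : Perm (Fin n)) i = (σ' : Perm (Fin n)) i := by
      intro i
      have h1 := hΨ σ i
      have h2 := hΨ σ' i
      rw [hs] at h1
      exact Fin.succAbove_right_injective (h1.symm.trans h2)
    exact Subtype.ext (Equiv.ext this)
  exact Nat.card_le_card_of_injective Ψ hinj

lemma dCount_congr {w w' : ℕ → Bool} (n : ℕ) (h : ∀ i, w (i + 1) = w' (i + 1)) :
    dCount w n = dCount w' n := by
  rw [dCount_eq, dCount_eq]
  exact Nat.card_congr (Equiv.subtypeEquivRight (fun π => by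
    constructor <;> intro hp i hi <;> [rw [← h i]; rw [h i]] <;> exact hp i hi))

lemma one_le_dCount (n : ℕ) : ∀ w : ℕ → Bool, 1 ≤ dCount w n := by
  induction n with
  | zero =>
    intro w
    rw [dCount_eq]
    have : Nonempty (DSet w 0) := ⟨⟨1, fun i hi => absurd hi (by omega)⟩⟩
    exact Nat.card_pos
  | succ n ih =>
    intro w
    exact le_trans (ih (fun i => w (i + 1))) (le_dCount_succ w n)

lemma dCount_le_factorial (w : ℕ → Bool) (n : ℕ) : dCount w n ≤ n.factorial := by
  rw [dCount_eq]
  calc Nat.card (DSet w n) ≤ Nat.card (Equiv.Perm (Fin n)) :=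
        Nat.card_le_card_of_injective Subtype.val Subtype.val_injective
    _ = n.factorial := by
        rw [Nat.card_eq_fintype_card, Fintype.card_perm, Fintype.card_fin]

lemma le_dCount_add (w : ℕ → Bool) (m : ℕ) : ∀ n : ℕ,
    dCount (fun i => w (m + i)) n ≤ dCount w (n + m) := by
  induction m with
  | zero =>
    intro n
    simp only [Nat.add_zero]
    exact le_of_eq (dCount_congr n (fun i => by rw [Nat.zero_add]))
  | succ m ih =>
    intro n
    have e1 : (fun i => w (m + 1 + i)) = (fun i => (fun j => w (m + j)) (i + 1)) := by
      funext i; congr 1; omega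
    calc dCount (fun i => w (m + 1 + i)) n
        = dCount (fun i => (fun j => w (m + j)) (i + 1)) n := by rw [e1]
      _ ≤ dCount (fun j => w (m + j)) (n + 1) := le_dCount_succ (fun j => w (m + j)) n
      _ ≤ dCount w ((n + 1) + m) := ih (n + 1)
      _ = dCount w (n + (m + 1)) := by congr 1; omega

lemma dCount_add_le (w : ℕ → Bool) (m : ℕ) : ∀ n : ℕ,
    dCount w (n + m) * n.factorial ≤ dCount (fun i => w (m + i)) n * (n + m).factorial := by
  induction m with
  | zero =>
    intro n
    simp only [Nat.add_zero]
    exact Nat.mul_le_mul_right _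
      (le_of_eq (dCount_congr n (fun i => (Nat.zero_add (i+1)).symm ▸ rfl)))
  | succ m ih =>
    intro n
    have e1 : (fun i => w (m + 1 + i)) = (fun i => (fun j => w (m + j)) (i + 1)) := by
      funext i; congr 1; omega
    have h1 : dCount w ((n + 1) + m) * (n + 1).factorial
        ≤ dCount (fun j => w (m + j)) (n + 1) * ((n + 1) + m).factorial := ih (n + 1)
    have h2 : dCount (fun j => w (m + j)) (n + 1)
        ≤ (n + 1) * dCount (fun i => w (m + 1 + i)) n := by
      rw [e1]; exact dCount_succ_le _ n
    have e2 : (n + 1) + m = n + (m + 1) := by omega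
    rw [e2] at h1
    have h3 : dCount w (n + (m + 1)) * (n + 1).factorial
        ≤ ((n + 1) * dCount (fun i => w (m + 1 + i)) n) * (n + (m + 1)).factorial :=
      h1.trans (Nat.mul_le_mul_right _ h2)
    rw [Nat.factorial_succ] at h3
    refine Nat.le_of_mul_le_mul_left ?_ (Nat.succ_pos n)
    calc (n + 1) * (dCount w (n + (m + 1)) * n.factorial)
        = dCount w (n + (m + 1)) * ((n + 1) * n.factorial) := by ring
      _ ≤ ((n + 1) * dCount (fun i => w (m + 1 + i)) n) * (n + (m + 1)).factorial := h3
      _ = (n + 1) * (dCount (fun i => w (m + 1 + i)) n * (n + (m + 1)).factorial) := by ring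

lemma factorial_add_le_mul_pow (n k : ℕ) : (n + k).factorial ≤ n.factorial * (n + k) ^ k := by
  induction k with
  | zero => simp
  | succ k ih =>
    calc (n + (k + 1)).factorial = (n + k + 1) * (n + k).factorial := by
          rw [show n + (k + 1) = (n + k) + 1 by omega, Nat.factorial_succ]
      _ ≤ (n + k + 1) * (n.factorial * (n + k) ^ k) := Nat.mul_le_mul_left _ ih
      _ ≤ (n + k + 1) * (n.factorial * (n + k + 1) ^ k) := by
          exact Nat.mul_le_mul_left _ (Nat.mul_le_mul_left _ (Nat.pow_le_pow_left (by omega) k))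
      _ = n.factorial * (n + (k + 1)) ^ (k + 1) := by
          rw [show n + (k+1) = n + k + 1 by omega, pow_succ]; ring

noncomputable def fseq (w : ℕ → Bool) (n : ℕ) : ℝ :=
  ((dCount w n : ℝ) / (Nat.factorial n : ℝ)) ^ (1 / (n : ℝ))

lemma fseq_nonneg (w : ℕ → Bool) (n : ℕ) : 0 ≤ fseq w n :=
  Real.rpow_nonneg (by positivity) _

lemma fseq_le_one (w : ℕ → Bool) (n : ℕ) : fseq w n ≤ 1 := by
  refine Real.rpow_le_one (by positivity) ?_ (by positivity)
  rw [div_le_one (by positivity)]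
  exact_mod_cast dCount_le_factorial w n

lemma aux_tendsto_rpow_one (b e : ℕ → ℝ) (hb : Tendsto b atTop atTop)
    (he : Tendsto (fun n => e n * Real.log (b n)) atTop (𝓝 0)) :
    Tendsto (fun n => b n ^ e n) atTop (𝓝 1) := by
  have hpos : ∀ᶠ n in atTop, 0 < b n := hb.eventually_gt_atTop 0
  have h2 : Tendsto (fun n => Real.exp (e n * Real.log (b n))) atTop (𝓝 1) := by
    simpa [Function.comp_def] using (Real.continuous_exp.tendsto 0).comp he
  refine h2.congr' ?_
  filter_upwards [hpos] with n hn
  rw [Real.rpow_def_of_pos hn, mul_comm]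

lemma tendsto_log_div : Tendsto (fun x : ℝ => Real.log x / x) atTop (𝓝 0) :=
  Real.isLittleO_log_id_atTop.tendsto_div_nhds_zero

lemma tendsto_B (k : ℕ) :
    Tendsto (fun n : ℕ => (n : ℝ) ^ ((k : ℝ) / ((n : ℝ) + (k : ℝ)))) atTop (𝓝 1) := by
  refine aux_tendsto_rpow_one _ _ tendsto_natCast_atTop_atTop ?_
  have hub : Tendsto (fun n : ℕ => (k : ℝ) * (Real.log n / n)) atTop (𝓝 0) := by
    have := (tendsto_log_div.comp tendsto_natCast_atTop_atTop).const_mul (k : ℝ)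
    simpa using this
  refine tendsto_of_tendsto_of_tendsto_of_le_of_le' tendsto_const_nhds hub ?_ ?_
  · filter_upwards [eventually_ge_atTop 1] with n hn
    have h1 : (1 : ℝ) ≤ (n : ℝ) := by exact_mod_cast hn
    have : (0:ℝ) ≤ Real.log n := Real.log_nonneg h1
    positivity
  · filter_upwards [eventually_ge_atTop 1] with n hn
    have h1 : (1 : ℝ) ≤ (n : ℝ) := by exact_mod_cast hn
    have hlogn : (0:ℝ) ≤ Real.log n := Real.log_nonneg h1
    have hnp : (0:ℝ) < (n:ℝ) := by linarith
    calc (k : ℝ) / ((n : ℝ) + k) * Real.log n = (k : ℝ) * (Real.log n / ((n:ℝ) + k)) := by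
          ring
      _ ≤ (k : ℝ) * (Real.log n / n) := by
          refine mul_le_mul_of_nonneg_left ?_ (Nat.cast_nonneg k)
          exact div_le_div_of_nonneg_left hlogn hnp (by linarith [Nat.cast_nonneg (α := ℝ) k])

lemma tendsto_A (k : ℕ) :
    Tendsto (fun n : ℕ => ((n : ℝ) + (k : ℝ)) ^ (-(k : ℝ) / ((n : ℝ) + (k : ℝ)))) atTop (𝓝 1) := by
  have hb : Tendsto (fun n : ℕ => (n : ℝ) + (k : ℝ)) atTop atTop :=
    tendsto_atTop_add_const_right _ _ tendsto_natCast_atTop_atTop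
  refine aux_tendsto_rpow_one _ _ hb ?_
  have hlb : Tendsto (fun n : ℕ => -((k : ℝ) * (Real.log ((n:ℝ)+k) / ((n:ℝ)+k)))) atTop (𝓝 0) := by
    have := ((tendsto_log_div.comp hb).const_mul (k : ℝ)).neg
    simpa using this
  refine tendsto_of_tendsto_of_tendsto_of_le_of_le' hlb tendsto_const_nhds ?_ ?_
  · filter_upwards [eventually_ge_atTop 1] with n hn
    have h1 : (1 : ℝ) ≤ (n : ℝ) := by exact_mod_cast hn
    have h2 : (1:ℝ) ≤ (n:ℝ) + k := by linarith [Nat.cast_nonneg (α := ℝ) k]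
    have hlogn : (0:ℝ) ≤ Real.log ((n:ℝ)+k) := Real.log_nonneg h2
    have : -(k : ℝ) / ((n : ℝ) + k) * Real.log ((n:ℝ)+k)
        = -((k : ℝ) * (Real.log ((n:ℝ)+k) / ((n:ℝ)+k))) := by ring
    rw [this]
  · filter_upwards [eventually_ge_atTop 1] with n hn
    have h1 : (1 : ℝ) ≤ (n : ℝ) := by exact_mod_cast hn
    have h2 : (1:ℝ) ≤ (n:ℝ) + k := by linarith [Nat.cast_nonneg (α := ℝ) k]
    have hlogn : (0:ℝ) ≤ Real.log ((n:ℝ)+k) := Real.log_nonneg h2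
    have hkn : (0:ℝ) ≤ (k:ℝ) / ((n:ℝ)+k) := by positivity
    have he : -(k:ℝ) / ((n:ℝ)+k) * Real.log ((n:ℝ)+k)
        = -((k:ℝ) / ((n:ℝ)+k) * Real.log ((n:ℝ)+k)) := by ring
    rw [he]
    exact neg_nonpos.mpr (mul_nonneg hkn hlogn)

lemma key_estimates (v : ℕ → Bool) (k n : ℕ) (hn : 1 ≤ n) :
    fseq (fun i => v (k + i)) n * (((n : ℝ) + (k : ℝ)) ^ (-(k : ℝ) / ((n : ℝ) + (k : ℝ))))
      ≤ fseq v (n + k) ∧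
    fseq v (n + k) ≤ fseq (fun i => v (k + i)) n * ((n : ℝ) ^ ((k : ℝ) / ((n : ℝ) + (k : ℝ)))) := by
  set u : ℕ → Bool := fun i => v (k + i) with hu
  have hnR : (0:ℝ) < (n:ℝ) := by exact_mod_cast hn
  have hnkR : (0:ℝ) < (n:ℝ) + k := by positivity
  set x : ℝ := (dCount u n : ℝ) / (n.factorial : ℝ) with hxdef
  set y : ℝ := (dCount v (n + k) : ℝ) / ((n + k).factorial : ℝ) with hydef
  have hfacn : (0:ℝ) < (n.factorial : ℝ) := by exact_mod_cast n.factorial_pos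
  have hfacnk : (0:ℝ) < ((n + k).factorial : ℝ) := by exact_mod_cast (n + k).factorial_pos
  have hx0 : 0 < x := by
    have : (0:ℝ) < (dCount u n : ℝ) := by exact_mod_cast one_le_dCount n u
    positivity
  have hx1 : x ≤ 1 := by
    rw [hxdef, div_le_one hfacn]
    exact_mod_cast dCount_le_factorial u n
  have hy0 : 0 ≤ y := by positivity
  -- y ≤ x
  have hyx : y ≤ x := by
    rw [hydef, hxdef, div_le_div_iff₀ hfacnk hfacn]
    exact_mod_cast dCount_add_le v k n
  -- x * (n+k)^(-k) ≤ y
  have hxy : x * ((n:ℝ) + k) ^ (-(k:ℝ)) ≤ y := by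
    have hre : ((n:ℝ) + k) ^ (-(k:ℝ)) = 1 / ((n:ℝ) + k) ^ (k:ℕ) := by
      rw [Real.rpow_neg hnkR.le, Real.rpow_natCast, one_div]
    have hpk : (0:ℝ) < ((n:ℝ) + k) ^ (k:ℕ) := by positivity
    rw [hre, hxdef]
    have h1 : (dCount u n : ℝ) / (n.factorial : ℝ) * (1 / ((n:ℝ) + k) ^ (k:ℕ))
        = (dCount u n : ℝ) / ((n.factorial : ℝ) * ((n:ℝ) + k) ^ (k:ℕ)) := by
      field_simp
    rw [h1, hydef]
    have h2 : (dCount u n : ℝ) ≤ (dCount v (n + k) : ℝ) := by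
      exact_mod_cast le_dCount_add v k n
    have h3 : ((n + k).factorial : ℝ) ≤ (n.factorial : ℝ) * ((n:ℝ) + k) ^ (k:ℕ) := by
      have := factorial_add_le_mul_pow n k
      push_cast
      exact_mod_cast this
    calc (dCount u n : ℝ) / ((n.factorial : ℝ) * ((n:ℝ) + k) ^ (k:ℕ))
        ≤ (dCount u n : ℝ) / ((n + k).factorial : ℝ) :=
          div_le_div_of_nonneg_left (by positivity) hfacnk h3
      _ ≤ (dCount v (n + k) : ℝ) / ((n + k).factorial : ℝ) := by gcongr
  -- fseq expressions
  have hcast : ((n + k : ℕ) : ℝ) = (n:ℝ) + k := by push_cast; ring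
  have hfv : fseq v (n + k) = y ^ (1 / ((n:ℝ) + k)) := by
    rw [fseq, hcast]
  have hfu : fseq u n = x ^ (1 / (n:ℝ)) := rfl
  have hexp0 : (0:ℝ) ≤ 1 / ((n:ℝ) + k) := by positivity
  have hexple : 1 / ((n:ℝ) + k) ≤ 1 / (n:ℝ) :=
    div_le_div_of_nonneg_left one_pos.le hnR (by linarith [Nat.cast_nonneg (α := ℝ) k])
  constructor
  · -- lower bound
    have s1 : x ^ (1/((n:ℝ)+k)) * (((n:ℝ)+k) ^ (-(k:ℝ))) ^ (1/((n:ℝ)+k)) ≤ y ^ (1/((n:ℝ)+k)) := by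
      rw [← Real.mul_rpow (le_of_lt hx0) (by positivity)]
      exact Real.rpow_le_rpow (by positivity) hxy hexp0
    have s2 : x ^ (1/(n:ℝ)) ≤ x ^ (1/((n:ℝ)+k)) :=
      Real.rpow_le_rpow_of_exponent_ge hx0 hx1 hexple
    have s3 : (((n:ℝ)+k) ^ (-(k:ℝ))) ^ (1/((n:ℝ)+k)) = ((n:ℝ)+k) ^ (-(k:ℝ)/((n:ℝ)+k)) := by
      rw [← Real.rpow_mul hnkR.le]
      congr 1
      ring
    rw [hfv, hfu]
    calc x ^ (1/(n:ℝ)) * (((n:ℝ)+k) ^ (-(k:ℝ)/((n:ℝ)+k)))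
        ≤ x ^ (1/((n:ℝ)+k)) * (((n:ℝ)+k) ^ (-(k:ℝ)/((n:ℝ)+k))) :=
          mul_le_mul_of_nonneg_right s2 (Real.rpow_nonneg hnkR.le _)
      _ = x ^ (1/((n:ℝ)+k)) * (((n:ℝ)+k) ^ (-(k:ℝ))) ^ (1/((n:ℝ)+k)) := by rw [s3]
      _ ≤ y ^ (1/((n:ℝ)+k)) := s1
  · -- upper bound
    have t1 : y ^ (1/((n:ℝ)+k)) ≤ x ^ (1/((n:ℝ)+k)) :=
      Real.rpow_le_rpow hy0 hyx hexp0
    have t2 : x ^ (1/((n:ℝ)+k)) = x ^ (1/(n:ℝ)) * x ^ (1/((n:ℝ)+k) - 1/(n:ℝ)) := by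
      rw [← Real.rpow_add hx0]
      congr 1
      ring
    have hxlb : ((n:ℝ)) ^ (-(n:ℝ)) ≤ x := by
      have h1 : (n.factorial : ℝ) ≤ (n:ℝ) ^ (n:ℕ) := by exact_mod_cast Nat.factorial_le_pow n
      have h2 : ((n:ℝ)) ^ (-(n:ℝ)) = 1 / (n:ℝ) ^ (n:ℕ) := by
        rw [Real.rpow_neg hnR.le, Real.rpow_natCast, one_div]
      rw [h2]
      have hd1 : (1:ℝ) ≤ (dCount u n : ℝ) := by exact_mod_cast one_le_dCount n u
      calc (1:ℝ) / (n:ℝ) ^ (n:ℕ) ≤ 1 / (n.factorial : ℝ) :=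
            div_le_div_of_nonneg_left one_pos.le hfacn h1
        _ ≤ x := by rw [hxdef]; gcongr
    have hexpneg : 1/((n:ℝ)+k) - 1/(n:ℝ) ≤ 0 := by linarith
    have t3 : x ^ (1/((n:ℝ)+k) - 1/(n:ℝ)) ≤ ((n:ℝ) ^ (-(n:ℝ))) ^ (1/((n:ℝ)+k) - 1/(n:ℝ)) :=
      Real.rpow_le_rpow_of_nonpos (Real.rpow_pos_of_pos hnR _) hxlb hexpneg
    have t4 : ((n:ℝ) ^ (-(n:ℝ))) ^ (1/((n:ℝ)+k) - 1/(n:ℝ)) = (n:ℝ) ^ ((k:ℝ)/((n:ℝ)+k)) := by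
      rw [← Real.rpow_mul hnR.le]
      congr 1
      field_simp
      ring
    rw [hfv, hfu]
    calc y ^ (1/((n:ℝ)+k)) ≤ x ^ (1/((n:ℝ)+k)) := t1
      _ = x ^ (1/(n:ℝ)) * x ^ (1/((n:ℝ)+k) - 1/(n:ℝ)) := t2
      _ ≤ x ^ (1/(n:ℝ)) * ((n:ℝ) ^ ((k:ℝ)/((n:ℝ)+k))) := by
          rw [← t4]
          exact mul_le_mul_of_nonneg_left t3 (Real.rpow_nonneg hx0.le _)

lemma key_sub_tendsto (v : ℕ → Bool) (k : ℕ) :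
    Tendsto (fun n => fseq v (n + k) - fseq (fun i => v (k + i)) n) atTop (𝓝 0) := by
  have hA := tendsto_A k
  have hB := tendsto_B k
  have hlow : Tendsto (fun n : ℕ =>
      ((n : ℝ) + (k : ℝ)) ^ (-(k : ℝ) / ((n : ℝ) + (k : ℝ))) - 1) atTop (𝓝 0) := by
    simpa using hA.sub_const 1
  have hup : Tendsto (fun n : ℕ =>
      (n : ℝ) ^ ((k : ℝ) / ((n : ℝ) + (k : ℝ))) - 1) atTop (𝓝 0) := by
    simpa using hB.sub_const 1
  refine tendsto_of_tendsto_of_tendsto_of_le_of_le' hlow hup ?_ ?_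
  · filter_upwards [eventually_ge_atTop 1] with n hn
    have h1 : (1 : ℝ) ≤ (n : ℝ) := by exact_mod_cast hn
    have hnkR : (1:ℝ) ≤ (n:ℝ) + k := by linarith [Nat.cast_nonneg (α := ℝ) k]
    obtain ⟨hl, -⟩ := key_estimates v k n hn
    have hA1 : ((n : ℝ) + (k : ℝ)) ^ (-(k : ℝ) / ((n : ℝ) + (k : ℝ))) ≤ 1 := by
      calc ((n : ℝ) + (k : ℝ)) ^ (-(k : ℝ) / ((n : ℝ) + (k : ℝ)))
          ≤ ((n : ℝ) + (k : ℝ)) ^ (0:ℝ) :=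
            Real.rpow_le_rpow_of_exponent_le hnkR
              (by rw [neg_div]; exact neg_nonpos.mpr (by positivity))
        _ = 1 := Real.rpow_zero _
    have hc0 := fseq_nonneg (fun i => v (k + i)) n
    have hc1 := fseq_le_one (fun i => v (k + i)) n
    nlinarith [hl]
  · filter_upwards [eventually_ge_atTop 1] with n hn
    have h1 : (1 : ℝ) ≤ (n : ℝ) := by exact_mod_cast hn
    obtain ⟨-, hr⟩ := key_estimates v k n hn
    have hB1 : (1:ℝ) ≤ (n : ℝ) ^ ((k : ℝ) / ((n : ℝ) + (k : ℝ))) := by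
      calc (1:ℝ) = (n:ℝ) ^ (0:ℝ) := (Real.rpow_zero _).symm
        _ ≤ (n : ℝ) ^ ((k : ℝ) / ((n : ℝ) + (k : ℝ))) :=
            Real.rpow_le_rpow_of_exponent_le h1 (by positivity)
    have hc0 := fseq_nonneg (fun i => v (k + i)) n
    have hc1 := fseq_le_one (fun i => v (k + i)) n
    nlinarith [hr]

lemma limsup_liminf_eq_of_sub {g c : ℕ → ℝ} (hg0 : ∀ n, 0 ≤ g n) (hg1 : ∀ n, g n ≤ 1)
    (hc0 : ∀ n, 0 ≤ c n) (hc1 : ∀ n, c n ≤ 1)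
    (h : Tendsto (fun n => g n - c n) atTop (𝓝 0)) :
    limsup g atTop = limsup c atTop ∧ liminf g atTop = liminf c atTop := by
  set d : ℕ → ℝ := fun n => g n - c n with hd
  set d' : ℕ → ℝ := fun n => c n - g n with hd'
  have h' : Tendsto d' atTop (𝓝 0) := by
    have h2 : d' = fun n => -(g n - c n) := funext fun n => by simp only [hd']; ring
    rw [h2]
    simpa [hd] using h.neg
  have Bg1 : IsBoundedUnder (· ≤ ·) atTop g := isBoundedUnder_of ⟨1, hg1⟩
  have Bg0 : IsBoundedUnder (· ≥ ·) atTop g := isBoundedUnder_of ⟨0, hg0⟩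
  have Bc1 : IsBoundedUnder (· ≤ ·) atTop c := isBoundedUnder_of ⟨1, hc1⟩
  have Bc0 : IsBoundedUnder (· ≥ ·) atTop c := isBoundedUnder_of ⟨0, hc0⟩
  have Bd1 : IsBoundedUnder (· ≤ ·) atTop d :=
    isBoundedUnder_of ⟨1, fun n => by have := hg1 n; have := hc0 n; simp [hd]; linarith⟩
  have Bd0 : IsBoundedUnder (· ≥ ·) atTop d :=
    isBoundedUnder_of ⟨-1, fun n => by have := hg0 n; have := hc1 n; simp [hd]; linarith⟩
  have Bd'1 : IsBoundedUnder (· ≤ ·) atTop d' :=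
    isBoundedUnder_of ⟨1, fun n => by have := hc1 n; have := hg0 n; simp [hd']; linarith⟩
  have Bd'0 : IsBoundedUnder (· ≥ ·) atTop d' :=
    isBoundedUnder_of ⟨-1, fun n => by have := hc0 n; have := hg1 n; simp [hd']; linarith⟩
  have hls : limsup d atTop = 0 := h.limsup_eq
  have hli : liminf d atTop = 0 := h.liminf_eq
  have hls' : limsup d' atTop = 0 := h'.limsup_eq
  have hli' : liminf d' atTop = 0 := h'.liminf_eq
  have ecd : c + d = g := by funext n; simp [hd]
  have egd : g + d' = c := by funext n; simp [hd']
  constructor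
  · apply le_antisymm
    · calc limsup g atTop = limsup (c + d) atTop := by rw [ecd]
        _ ≤ limsup c atTop + limsup d atTop :=
          limsup_add_le Bc0 Bc1 Bd0.isCoboundedUnder_le Bd1
        _ = limsup c atTop := by rw [hls, add_zero]
    · calc limsup c atTop = limsup (g + d') atTop := by rw [egd]
        _ ≤ limsup g atTop + limsup d' atTop :=
          limsup_add_le Bg0 Bg1 Bd'0.isCoboundedUnder_le Bd'1
        _ = limsup g atTop := by rw [hls', add_zero]
  · apply le_antisymm
    · have hcalc : liminf g atTop + liminf d' atTop ≤ liminf (g + d') atTop :=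
        le_liminf_add Bg0 Bg1 Bd'0 Bd'1.isCoboundedUnder_ge
      rw [egd, hli', add_zero] at hcalc
      exact hcalc
    · have hcalc : liminf c atTop + liminf d atTop ≤ liminf (c + d) atTop :=
        le_liminf_add Bc0 Bc1 Bd0 Bd1.isCoboundedUnder_ge
      rw [ecd, hli, add_zero] at hcalc
      exact hcalc

lemma main_aux (v : ℕ → Bool) (k : ℕ) :
    limsup (fseq v) atTop = limsup (fseq (fun i => v (k + i))) atTop ∧
    liminf (fseq v) atTop = liminf (fseq (fun i => v (k + i))) atTop := by
  have h1 : limsup (fseq v) atTop = limsup (fun n => fseq v (n + k)) atTop :=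
    (limsup_nat_add (fseq v) k).symm
  have h2 : liminf (fseq v) atTop = liminf (fun n => fseq v (n + k)) atTop :=
    (liminf_nat_add (fseq v) k).symm
  have key := limsup_liminf_eq_of_sub (g := fun n => fseq v (n + k))
    (c := fseq (fun i => v (k + i)))
    (fun n => fseq_nonneg v (n + k)) (fun n => fseq_le_one v (n + k))
    (fseq_nonneg _) (fseq_le_one _) (key_sub_tendsto v k)
  exact ⟨h1.trans key.1, h2.trans key.2⟩

theorem stmt9 (w w' : ℕ → Bool) (m m' : ℕ)
    (h : ∀ i : ℕ, 1 ≤ i → w (m + i) = w' (m' + i)) :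
    limsup (fun n : ℕ => ((dCount w n : ℝ) / (Nat.factorial n : ℝ)) ^ (1 / (n : ℝ))) atTop =
      limsup (fun n : ℕ => ((dCount w' n : ℝ) / (Nat.factorial n : ℝ)) ^ (1 / (n : ℝ))) atTop ∧
    liminf (fun n : ℕ => ((dCount w n : ℝ) / (Nat.factorial n : ℝ)) ^ (1 / (n : ℝ))) atTop =
      liminf (fun n : ℕ => ((dCount w' n : ℝ) / (Nat.factorial n : ℝ)) ^ (1 / (n : ℝ))) atTop := by
  have hu : ∀ i, (fun j => w (m + j)) (i + 1) = (fun j => w' (m' + j)) (i + 1) :=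
    fun i => h (i + 1) (by omega)
  have hfe : fseq (fun j => w (m + j)) = fseq (fun j => w' (m' + j)) := by
    funext n
    rw [fseq, fseq,
      dCount_congr (w := fun j => w (m + j)) (w' := fun j => w' (m' + j)) n hu]
  have A := main_aux w m
  have B := main_aux w' m'
  constructor
  · show limsup (fseq w) atTop = limsup (fseq w') atTop
    rw [A.1, hfe, ← B.1]
  · show liminf (fseq w) atTop = liminf (fseq w') atTop
    rw [A.2, hfe, ← B.2]
end

section
/- Let w be an infinite binary word, M > 0 a real number, and n, k ≥ 1 integers such that w_{n+i−1} = 0 for all 1 ≤ i ≤ k and M^k / k! ≤ 1. Then d_{n+k}(w) · M^{n+k} / (n+k)! ≤ d_n(w) · M^n / n!. -/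
open Filter

section Aux

open Finset Function

/-- values of `π` on the last `k` positions -/
noncomputable def splitSet (n k : ℕ) (π : Equiv.Perm (Fin (n + k))) : Finset (Fin (n + k)) :=
  Finset.univ.image (fun j : Fin k => π (Fin.natAdd n j))

lemma natAdd_inj (n k : ℕ) : Function.Injective (Fin.natAdd n : Fin k → Fin (n + k)) := by
  intro a b h
  apply Fin.ext
  have := Fin.mk.injEq (n + a.1) _ (n + b.1) _ ▸ h
  omega

lemma splitSet_card (n k : ℕ) (π : Equiv.Perm (Fin (n + k))) : (splitSet n k π).card = k := by
  have hinj : Function.Injective (fun j : Fin k => π (Fin.natAdd n j)) :=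
    fun a b h => natAdd_inj n k (π.injective h)
  rw [splitSet, Finset.card_image_of_injective _ hinj]
  simp

lemma splitSet_compl_card (n k : ℕ) (π : Equiv.Perm (Fin (n + k))) :
    ((splitSet n k π)ᶜ).card = n := by
  rw [Finset.card_compl, splitSet_card]
  simp

lemma castAdd_mem_compl (n k : ℕ) (π : Equiv.Perm (Fin (n + k))) (j : Fin n) :
    π (Fin.castAdd k j) ∈ (splitSet n k π)ᶜ := by
  rw [Finset.mem_compl, splitSet, Finset.mem_image]
  rintro ⟨j', -, hj'⟩
  have := π.injective hj'
  have h1 : (Fin.natAdd n j' : Fin (n+k)).1 = n + j'.1 := rfl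
  have h2 : (Fin.castAdd k j : Fin (n+k)).1 = j.1 := rfl
  rw [Fin.ext_iff, h1, h2] at this
  omega

/-- the standardization of `π` on the first `n` positions -/
noncomputable def stdzFun (n k : ℕ) (π : Equiv.Perm (Fin (n + k))) (j : Fin n) : Fin n :=
  (((splitSet n k π)ᶜ).orderIsoOfFin (splitSet_compl_card n k π)).symm
    ⟨π (Fin.castAdd k j), castAdd_mem_compl n k π j⟩

lemma stdzFun_lt_iff (n k : ℕ) (π : Equiv.Perm (Fin (n + k))) (a b : Fin n) :
    stdzFun n k π a < stdzFun n k π b ↔ π (Fin.castAdd k a) < π (Fin.castAdd k b) := by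
  rw [stdzFun, stdzFun, OrderIso.lt_iff_lt]
  rfl

lemma stdzFun_inj (n k : ℕ) (π : Equiv.Perm (Fin (n + k))) :
    Function.Injective (stdzFun n k π) := by
  intro a b h
  have h2 := (((splitSet n k π)ᶜ).orderIsoOfFin (splitSet_compl_card n k π)).symm.injective h
  rw [Subtype.mk.injEq] at h2
  exact Fin.castAdd_injective n k (π.injective h2)

/-- the standardization as a permutation -/
noncomputable def stdz (n k : ℕ) (π : Equiv.Perm (Fin (n + k))) : Equiv.Perm (Fin n) :=
  Equiv.ofBijective (stdzFun n k π) (Finite.injective_iff_bijective.mp (stdzFun_inj n k π))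

lemma stdz_apply (n k : ℕ) (π : Equiv.Perm (Fin (n + k))) (j : Fin n) :
    stdz n k π j = stdzFun n k π j := rfl

lemma orderEmbOfFin_congr {α} [LinearOrder α] {s t : Finset α} (hst : s = t) {m : ℕ}
    (hs : s.card = m) (j : Fin m) :
    s.orderEmbOfFin hs j = t.orderEmbOfFin (hst ▸ hs) j := by subst hst; rfl

lemma strictMono_aux {α} [Preorder α] {k : ℕ} (f : Fin k → α)
    (h : ∀ j (hj : j + 1 < k), f ⟨j, Nat.lt_of_succ_lt hj⟩ < f ⟨j + 1, hj⟩) :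
    StrictMono f := by
  have key : ∀ b (hb : b < k), ∀ a (ha : a < k), a < b → f ⟨a, ha⟩ < f ⟨b, hb⟩ := by
    intro b
    induction b with
    | zero => omega
    | succ b ih =>
      intro hb a ha hab
      rcases Nat.lt_or_ge a b with h' | h'
      · exact lt_trans (ih (Nat.lt_of_succ_lt hb) a ha h') (h b hb)
      · have : a = b := by omega
        subst this
        exact h a hb
  intro a b hab
  exact key b.1 b.2 a.1 a.2 hab

/-- reconstruction of `π` on the first `n` positions from `stdz` and `splitSet` -/
lemma recon_first (n k : ℕ) (π : Equiv.Perm (Fin (n + k))) (j : Fin n) :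
    π (Fin.castAdd k j) =
      ((splitSet n k π)ᶜ).orderEmbOfFin (splitSet_compl_card n k π) (stdz n k π j) := by
  have hsm : StrictMono (fun j => π (Fin.castAdd k ((stdz n k π).symm j))) := by
    intro a b hab
    rw [← stdzFun_lt_iff n k π]
    have ha : stdzFun n k π ((stdz n k π).symm a) = a := (stdz n k π).apply_symm_apply a
    have hb : stdzFun n k π ((stdz n k π).symm b) = b := (stdz n k π).apply_symm_apply b
    rw [ha, hb]; exact hab
  have hmem : ∀ x, (fun j => π (Fin.castAdd k ((stdz n k π).symm j))) x ∈ (splitSet n k π)ᶜ :=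
    fun x => castAdd_mem_compl n k π _
  have := Finset.orderEmbOfFin_unique (splitSet_compl_card n k π) hmem hsm
  have h2 := congrFun this (stdz n k π j)
  simp only [Equiv.symm_apply_apply] at h2
  exact h2

/-- reconstruction of `π` on the last `k` positions from `splitSet`,
using that `π` is increasing there -/
lemma recon_last (w : ℕ → Bool) (n k : ℕ)
    (hw : ∀ i : ℕ, 1 ≤ i → i ≤ k → w (n + i - 1) = false)
    (π : Equiv.Perm (Fin (n + k)))
    (hπ : ∀ i : ℕ, ∀ h : i + 1 < n + k,
      (π ⟨i + 1, h⟩ < π ⟨i, Nat.lt_of_succ_lt h⟩ ↔ w (i + 1) = true))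
    (j : Fin k) :
    π (Fin.natAdd n j) = (splitSet n k π).orderEmbOfFin (splitSet_card n k π) j := by
  have hsm : StrictMono (fun j : Fin k => π (Fin.natAdd n j)) := by
    apply strictMono_aux
    intro j hj
    have hlt : n + j + 1 < n + k := by omega
    have hwv : w (n + j + 1) = false := by
      have := hw (j + 2) (by omega) (by omega)
      have heq : n + (j + 2) - 1 = n + j + 1 := by omega
      rw [heq] at this
      exact this
    have hiff := hπ (n + j) hlt
    rw [hwv] at hiff
    simp only [Bool.false_eq_true, iff_false, not_lt] at hiff
    have hne : π ⟨n + j + 1, hlt⟩ ≠ π ⟨n + j, Nat.lt_of_succ_lt hlt⟩ := by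
      intro h
      have := π.injective h
      rw [Fin.ext_iff] at this
      simp at this
    have : π ⟨n + j, Nat.lt_of_succ_lt hlt⟩ < π ⟨n + j + 1, hlt⟩ :=
      lt_of_le_of_ne hiff (Ne.symm hne)
    show π (Fin.natAdd n ⟨j, _⟩) < π (Fin.natAdd n ⟨j + 1, hj⟩)
    convert this using 2 <;> rw [Fin.ext_iff] <;> simp [Fin.natAdd] <;> omega
  have hmem : ∀ x, (fun j : Fin k => π (Fin.natAdd n j)) x ∈ splitSet n k π := by
    intro x
    rw [splitSet, Finset.mem_image]
    exact ⟨x, Finset.mem_univ x, rfl⟩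
  exact congrFun (Finset.orderEmbOfFin_unique (splitSet_card n k π) hmem hsm) j

lemma key_count (w : ℕ → Bool) (n k : ℕ)
    (hw : ∀ i : ℕ, 1 ≤ i → i ≤ k → w (n + i - 1) = false) :
    dCount w (n + k) ≤ dCount w n * (n + k).choose k := by
  classical
  set P : ℕ → Type := fun m => {π : Equiv.Perm (Fin m) //
    ∀ i : ℕ, ∀ h : i + 1 < m,
      (π ⟨i + 1, h⟩ < π ⟨i, Nat.lt_of_succ_lt h⟩ ↔ w (i + 1) = true)} with hP
  have hvalid : ∀ π : P (n + k), ∀ i : ℕ, ∀ h : i + 1 < n,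
      ((stdz n k π.1) ⟨i + 1, h⟩ < (stdz n k π.1) ⟨i, Nat.lt_of_succ_lt h⟩ ↔
        w (i + 1) = true) := by
    rintro ⟨π, hπ⟩ i h
    rw [stdz_apply, stdz_apply, stdzFun_lt_iff]
    have h' : i + 1 < n + k := by omega
    have := hπ i h'
    convert this using 2 <;> rfl
  let F : P (n + k) → P n × {s : Finset (Fin (n + k)) // s.card = k} :=
    fun π => (⟨stdz n k π.1, hvalid π⟩, ⟨splitSet n k π.1, splitSet_card n k π.1⟩)
  have hFinj : Function.Injective F := by
    rintro ⟨π, hπ⟩ ⟨π', hπ'⟩ h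
    rw [Prod.ext_iff, Subtype.ext_iff, Subtype.ext_iff] at h
    obtain ⟨h1, h2⟩ := h
    simp only [F] at h1 h2
    apply Subtype.ext
    apply Equiv.ext
    intro x
    refine Fin.addCases (fun j => ?_) (fun j => ?_) x
    · rw [recon_first n k π j, recon_first n k π' j, h1,
        orderEmbOfFin_congr (congrArg (·ᶜ) h2)]
    · rw [recon_last w n k hw π hπ j, recon_last w n k hw π' hπ' j,
        orderEmbOfFin_congr h2]
  calc dCount w (n + k) = Nat.card (P (n + k)) := rfl
    _ ≤ Nat.card (P n × {s : Finset (Fin (n + k)) // s.card = k}) :=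
        Nat.card_le_card_of_injective F hFinj
    _ = dCount w n * (n + k).choose k := by
        rw [Nat.card_prod]
        congr 1
        rw [Nat.card_eq_fintype_card, Fintype.card_finset_len, Fintype.card_fin]

end Aux

theorem stmt11 (w : ℕ → Bool) (M : ℝ) (hM : 0 < M) (n k : ℕ) (hn : 1 ≤ n) (hk : 1 ≤ k)
    (hw : ∀ i : ℕ, 1 ≤ i → i ≤ k → w (n + i - 1) = false)
    (hMk : M ^ k / (Nat.factorial k : ℝ) ≤ 1) :
    (dCount w (n + k) : ℝ) * M ^ (n + k) / (Nat.factorial (n + k) : ℝ) ≤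
      (dCount w n : ℝ) * M ^ n / (Nat.factorial n : ℝ) := by
  have hcount : (dCount w (n + k) : ℝ) ≤ (dCount w n : ℝ) * ((n + k).choose k : ℝ) := by
    exact_mod_cast key_count w n k hw
  have hfac : ((n + k).choose k : ℝ) * (Nat.factorial n : ℝ) * (Nat.factorial k : ℝ)
      = (Nat.factorial (n + k) : ℝ) := by
    exact_mod_cast congrArg (Nat.cast : ℕ → ℝ) (Nat.add_choose_mul_factorial_mul_factorial n k)
  have hfacn : (0 : ℝ) < (Nat.factorial n : ℝ) := by positivity
  have hfack : (0 : ℝ) < (Nat.factorial k : ℝ) := by positivity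
  have hfacnk : (0 : ℝ) < (Nat.factorial (n + k) : ℝ) := by positivity
  have step1 : (dCount w (n + k) : ℝ) * M ^ (n + k) / (Nat.factorial (n + k) : ℝ) ≤
      ((dCount w n : ℝ) * ((n + k).choose k : ℝ)) * M ^ (n + k) /
        (Nat.factorial (n + k) : ℝ) := by
    gcongr
  have step2 : ((dCount w n : ℝ) * ((n + k).choose k : ℝ)) * M ^ (n + k) /
      (Nat.factorial (n + k) : ℝ) =
      ((dCount w n : ℝ) * M ^ n / (Nat.factorial n : ℝ)) *
        (M ^ k / (Nat.factorial k : ℝ)) := by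
    have hch : (0:ℝ) < ((n + k).choose k : ℝ) := by
      exact_mod_cast Nat.choose_pos (Nat.le_add_left k n)
    rw [← hfac, pow_add]
    field_simp
  have step3 : ((dCount w n : ℝ) * M ^ n / (Nat.factorial n : ℝ)) *
      (M ^ k / (Nat.factorial k : ℝ)) ≤
      (dCount w n : ℝ) * M ^ n / (Nat.factorial n : ℝ) := by
    have hnn : (0 : ℝ) ≤ (dCount w n : ℝ) * M ^ n / (Nat.factorial n : ℝ) := by positivity
    calc _ ≤ ((dCount w n : ℝ) * M ^ n / (Nat.factorial n : ℝ)) * 1 := by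
            exact mul_le_mul_of_nonneg_left hMk hnn
      _ = _ := mul_one _
  linarith [step1, step2 ▸ step1]
end

section
/- Let w be an infinite binary word, M > 0 a real number, and n ≥ 2, k ≥ 1 integers such that w_{n−1} = 0, and for all 1 ≤ i ≤ k, w_{n+i−1} = 1 if i is odd and w_{n+i−1} = 0 if i is even. Suppose (1/2) · (E_k / k!) · M^k ≥ 1, where E_k is the number of alternating permutations of {1,…,k}. Then d_{n+k}(w) · M^{n+k} / (n+k)! ≥ d_n(w) · M^n / n!. -/
open Filter

section Stmt12AuxSection
open Equiv Finset

namespace Stmt12Aux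

variable {n k : ℕ}

noncomputable def valEquiv (S : Finset (Fin (n+k))) (hS : S.card = k)
    (hc : Sᶜ.card = n) : (Fin n ⊕ Fin k) ≃ Fin (n+k) :=
  (Equiv.sumCongr (Sᶜ.orderIsoOfFin hc).toEquiv (S.orderIsoOfFin hS).toEquiv).trans
    ((Equiv.sumComm _ _).trans
      ((Equiv.sumCongr (Equiv.refl _)
          (Equiv.subtypeEquivRight (fun x => Finset.mem_compl))).trans
        (Equiv.sumCompl (· ∈ S))))

@[simp] lemma valEquiv_inl (S : Finset (Fin (n+k))) (hS : S.card = k) (hc : Sᶜ.card = n)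
    (j : Fin n) : valEquiv S hS hc (Sum.inl j) = ↑(Sᶜ.orderIsoOfFin hc j) := by
  simp [valEquiv, Equiv.subtypeEquivRight]
  rfl

@[simp] lemma valEquiv_inr (S : Finset (Fin (n+k))) (hS : S.card = k) (hc : Sᶜ.card = n)
    (m : Fin k) : valEquiv S hS hc (Sum.inr m) = ↑(S.orderIsoOfFin hS m) := by
  simp [valEquiv]

noncomputable def mergePerm (π : Equiv.Perm (Fin n)) (σ : Equiv.Perm (Fin k))
    (S : Finset (Fin (n+k))) (hS : S.card = k) (hc : Sᶜ.card = n) : Equiv.Perm (Fin (n+k)) :=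
  finSumFinEquiv.symm.trans ((Equiv.sumCongr (π : Fin n ≃ Fin n) (σ : Fin k ≃ Fin k)).trans
    (valEquiv S hS hc))

lemma merge_castAdd (π : Equiv.Perm (Fin n)) (σ : Equiv.Perm (Fin k))
    (S : Finset (Fin (n+k))) (hS : S.card = k) (hc : Sᶜ.card = n) (j : Fin n) :
    mergePerm π σ S hS hc (Fin.castAdd k j) = ↑(Sᶜ.orderIsoOfFin hc (π j)) := by
  simp [mergePerm]

lemma merge_natAdd (π : Equiv.Perm (Fin n)) (σ : Equiv.Perm (Fin k))
    (S : Finset (Fin (n+k))) (hS : S.card = k) (hc : Sᶜ.card = n) (m : Fin k) :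
    mergePerm π σ S hS hc (Fin.natAdd n m) = ↑(S.orderIsoOfFin hS (σ m)) := by
  simp [mergePerm]

end Stmt12Aux

namespace Stmt12Aux

lemma merge_image (π : Equiv.Perm (Fin n)) (σ : Equiv.Perm (Fin k))
    (S : Finset (Fin (n+k))) (hS : S.card = k) (hc : Sᶜ.card = n) :
    S = Finset.image (fun m : Fin k => mergePerm π σ S hS hc (Fin.natAdd n m)) Finset.univ := by
  ext x
  simp only [Finset.mem_image, Finset.mem_univ, true_and, merge_natAdd]
  constructor
  · intro hx
    refine ⟨σ.symm ((S.orderIsoOfFin hS).symm ⟨x, hx⟩), ?_⟩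
    simp
  · rintro ⟨m, rfl⟩
    exact (S.orderIsoOfFin hS (σ m)).2

lemma merge_inj (π π' : Equiv.Perm (Fin n)) (σ σ' : Equiv.Perm (Fin k))
    (S S' : Finset (Fin (n+k))) (hS : S.card = k) (hc : Sᶜ.card = n)
    (hS' : S'.card = k) (hc' : S'ᶜ.card = n)
    (h : mergePerm π σ S hS hc = mergePerm π' σ' S' hS' hc') :
    π = π' ∧ σ = σ' ∧ S = S' := by
  have hSS : S = S' := by
    rw [merge_image π σ S hS hc, merge_image π' σ' S' hS' hc', h]
  subst hSS
  refine ⟨?_, ?_, rfl⟩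
  · ext j
    have := DFunLike.congr_fun h (Fin.castAdd k j)
    rw [merge_castAdd, merge_castAdd] at this
    have h2 : (Sᶜ.orderIsoOfFin hc) (π j) = (Sᶜ.orderIsoOfFin hc) (π' j) := Subtype.ext this
    exact Fin.val_eq_of_eq ((Sᶜ.orderIsoOfFin hc).injective h2)
  · ext m
    have := DFunLike.congr_fun h (Fin.natAdd n m)
    rw [merge_natAdd, merge_natAdd] at this
    have h2 : (S.orderIsoOfFin hS) (σ m) = (S.orderIsoOfFin hS) (σ' m) := Subtype.ext this
    exact Fin.val_eq_of_eq ((S.orderIsoOfFin hS).injective h2)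

end Stmt12Aux

namespace Stmt12Aux

def OKp (w : ℕ → Bool) (N : ℕ) (τ : Equiv.Perm (Fin N)) : Prop :=
  ∀ i : ℕ, ∀ h : i + 1 < N,
    (τ ⟨i + 1, h⟩ < τ ⟨i, Nat.lt_of_succ_lt h⟩ ↔ w (i + 1) = true)

def Alt (k : ℕ) (σ : Equiv.Perm (Fin k)) : Prop :=
  ∀ i : ℕ, ∀ h : i + 1 < k,
    if i % 2 = 0 then σ ⟨i, Nat.lt_of_succ_lt h⟩ < σ ⟨i + 1, h⟩
    else σ ⟨i + 1, h⟩ < σ ⟨i, Nat.lt_of_succ_lt h⟩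

/-- predicate with the boundary position excluded -/
def OKb (w : ℕ → Bool) (n N : ℕ) (τ : Equiv.Perm (Fin N)) : Prop :=
  ∀ i : ℕ, ∀ h : i + 1 < N, i ≠ n - 1 →
    (τ ⟨i + 1, h⟩ < τ ⟨i, Nat.lt_of_succ_lt h⟩ ↔ w (i + 1) = true)

lemma merge_OKb (w : ℕ → Bool) (hn : 2 ≤ n)
    (hw : ∀ i : ℕ, 1 ≤ i → i ≤ k → (w (n + i - 1) = true ↔ i % 2 = 1))
    (π : Equiv.Perm (Fin n)) (σ : Equiv.Perm (Fin k))
    (S : Finset (Fin (n+k))) (hS : S.card = k) (hc : Sᶜ.card = n)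
    (hπ : OKp w n π) (hσ : Alt k σ) :
    OKb w n (n+k) (mergePerm π σ S hS hc) := by
  intro i h hne
  by_cases h1 : i + 1 < n
  · have e1 : (⟨i + 1, h⟩ : Fin (n+k)) = Fin.castAdd k ⟨i + 1, h1⟩ := rfl
    have e2 : (⟨i, Nat.lt_of_succ_lt h⟩ : Fin (n+k)) =
        Fin.castAdd k ⟨i, Nat.lt_of_succ_lt h1⟩ := rfl
    rw [e1, e2, merge_castAdd, merge_castAdd, Subtype.coe_lt_coe, OrderIso.lt_iff_lt]
    exact hπ i h1
  · -- second block : i ≥ n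
    obtain ⟨m, rfl⟩ : ∃ m, i = n + m := ⟨i - n, by omega⟩
    have hm1 : m + 1 < k := by omega
    have e1 : (⟨n + m + 1, h⟩ : Fin (n+k)) = Fin.natAdd n ⟨m + 1, hm1⟩ := rfl
    have e2 : (⟨n + m, Nat.lt_of_succ_lt h⟩ : Fin (n+k)) =
        Fin.natAdd n ⟨m, Nat.lt_of_succ_lt hm1⟩ := rfl
    rw [e1, e2, merge_natAdd, merge_natAdd, Subtype.coe_lt_coe, OrderIso.lt_iff_lt]
    have hz := hσ m hm1
    have hwv := hw (m + 2) (by omega) (by omega)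
    have he : n + (m + 2) - 1 = n + m + 1 := by omega
    rw [he] at hwv
    by_cases hm : m % 2 = 0
    · rw [if_pos hm] at hz
      have hnw : ¬ (w (n + m + 1) = true) := by
        rw [hwv]; omega
      exact iff_of_false (lt_asymm hz) hnw
    · rw [if_neg hm] at hz
      have hww : w (n + m + 1) = true := by rw [hwv]; omega
      exact iff_of_true hz hww

end Stmt12Aux

namespace Stmt12Aux

lemma card_lower (w : ℕ → Bool) (hn : 2 ≤ n)
    (hw : ∀ i : ℕ, 1 ≤ i → i ≤ k → (w (n + i - 1) = true ↔ i % 2 = 1)) :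
    Nat.card {π : Equiv.Perm (Fin n) // OKp w n π} * Nat.card {σ : Equiv.Perm (Fin k) // Alt k σ}
      * ((n+k).choose k)
      ≤ Nat.card {τ : Equiv.Perm (Fin (n+k)) // OKb w n (n+k) τ} := by
  have hcompl : ∀ S : Finset (Fin (n+k)), S.card = k → Sᶜ.card = n := by
    intro S h
    rw [Finset.card_compl, h]
    simp
  set F : ({π : Equiv.Perm (Fin n) // OKp w n π} × {σ : Equiv.Perm (Fin k) // Alt k σ}
      × {S : Finset (Fin (n+k)) // S.card = k}) → {τ : Equiv.Perm (Fin (n+k)) // OKb w n (n+k) τ} :=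
    fun t => ⟨mergePerm t.1.1 t.2.1.1 t.2.2.1 t.2.2.2 (hcompl _ t.2.2.2),
      merge_OKb w hn hw _ _ _ _ _ t.1.2 t.2.1.2⟩ with hF
  have hinj : Function.Injective F := by
    rintro ⟨⟨π, hπ⟩, ⟨σ, hσ⟩, ⟨S, hS⟩⟩ ⟨⟨π', hπ'⟩, ⟨σ', hσ'⟩, ⟨S', hS'⟩⟩ hab
    have := merge_inj π π' σ σ' S S' hS (hcompl _ hS) hS' (hcompl _ hS')
      (congrArg Subtype.val hab)
    obtain ⟨h1, h2, h3⟩ := this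
    subst h1; subst h2; subst h3
    rfl
  have := Nat.card_le_card_of_injective F hinj
  calc Nat.card {π : Equiv.Perm (Fin n) // OKp w n π}
        * Nat.card {σ : Equiv.Perm (Fin k) // Alt k σ} * ((n+k).choose k)
      = Nat.card ({π : Equiv.Perm (Fin n) // OKp w n π} × {σ : Equiv.Perm (Fin k) // Alt k σ}
          × {S : Finset (Fin (n+k)) // S.card = k}) := by
        rw [Nat.card_prod, Nat.card_prod]
        rw [Nat.card_eq_fintype_card (α := {S : Finset (Fin (n+k)) // S.card = k})]
        rw [Fintype.card_finset_len, Fintype.card_fin]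
        ring
    _ ≤ _ := this

end Stmt12Aux

namespace Stmt12Aux

lemma desc_OK (w : ℕ → Bool) (hn : 2 ≤ n) (hk : 1 ≤ k)
    (hw : ∀ i : ℕ, 1 ≤ i → i ≤ k → (w (n + i - 1) = true ↔ i % 2 = 1))
    (τ : Equiv.Perm (Fin (n+k))) (hτ : OKb w n (n+k) τ)
    (hd : τ ⟨n, by omega⟩ < τ ⟨n - 1, by omega⟩) :
    OKp w (n+k) τ := by
  intro i h
  by_cases hi : i = n - 1
  · subst hi
    have e1 : (⟨n - 1 + 1, h⟩ : Fin (n+k)) = ⟨n, by omega⟩ := Fin.ext (show n - 1 + 1 = n by omega)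
    rw [e1]
    have hwn : w (n - 1 + 1) = true := by
      rw [show n - 1 + 1 = n by omega]
      have := hw 1 le_rfl hk
      rw [show n + 1 - 1 = n by omega] at this
      exact this.mpr rfl
    exact iff_of_true hd hwn
  · exact hτ i h hi

lemma asc_OK (w : ℕ → Bool) (hn : 2 ≤ n) (hk : 1 ≤ k)
    (hlast : w (n - 1) = false)
    (hw : ∀ i : ℕ, 1 ≤ i → i ≤ k → (w (n + i - 1) = true ↔ i % 2 = 1))
    (τ : Equiv.Perm (Fin (n+k))) (hτ : OKb w n (n+k) τ)
    (hd : ¬ τ ⟨n, by omega⟩ < τ ⟨n - 1, by omega⟩) :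
    OKp w (n+k) ((Equiv.swap (⟨n - 1, by omega⟩ : Fin (n+k)) ⟨n, by omega⟩).trans τ) := by
  set p : Fin (n+k) := ⟨n - 1, by omega⟩ with hp
  set q : Fin (n+k) := ⟨n, by omega⟩ with hq
  have hpq : p ≠ q := by simp [hp, hq, Fin.ext_iff]; omega
  have hlt : τ p < τ q := lt_of_le_of_ne (not_lt.mp hd) (fun e => hpq (τ.injective e))
  intro i h
  simp only [Equiv.trans_apply]
  by_cases h2 : i + 2 < n
  · have e1 : Equiv.swap p q ⟨i + 1, h⟩ = ⟨i + 1, h⟩ :=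
      Equiv.swap_apply_of_ne_of_ne (by simp [hp, Fin.ext_iff]; omega)
        (by simp [hq, Fin.ext_iff]; omega)
    have e2 : Equiv.swap p q ⟨i, Nat.lt_of_succ_lt h⟩ = ⟨i, Nat.lt_of_succ_lt h⟩ :=
      Equiv.swap_apply_of_ne_of_ne (by simp [hp, Fin.ext_iff]; omega)
        (by simp [hq, Fin.ext_iff]; omega)
    rw [e1, e2]
    exact hτ i h (by omega)
  by_cases h3 : i + 2 = n
  · -- i = n - 2 : compare positions n-2 and n-1 = p
    have e1 : (⟨i + 1, h⟩ : Fin (n+k)) = p := Fin.ext (by simp [hp]; omega)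
    have e2 : Equiv.swap p q ⟨i, Nat.lt_of_succ_lt h⟩ = ⟨i, Nat.lt_of_succ_lt h⟩ :=
      Equiv.swap_apply_of_ne_of_ne (by simp [hp, Fin.ext_iff]; omega)
        (by simp [hq, Fin.ext_iff]; omega)
    rw [e1, Equiv.swap_apply_left, e2]
    have hwi : w (i + 1) = false := by rw [show i + 1 = n - 1 by omega]; exact hlast
    have h0 := hτ i h (by omega)
    rw [e1] at h0
    have hlt2 : τ ⟨i, Nat.lt_of_succ_lt h⟩ < τ p := by
      have hnlt : ¬ τ p < τ ⟨i, Nat.lt_of_succ_lt h⟩ := by rw [h0, hwi]; simp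
      refine lt_of_le_of_ne (not_lt.mp hnlt) ?_
      intro e
      have := τ.injective e
      rw [hp] at this
      simp [Fin.ext_iff] at this
      omega
    exact iff_of_false (lt_asymm (hlt2.trans hlt)) (by simp [hwi])
  by_cases h4 : i + 1 = n
  · -- i = n - 1 : boundary
    have e1 : (⟨i + 1, h⟩ : Fin (n+k)) = q := Fin.ext (by simp [hq]; omega)
    have e2 : (⟨i, Nat.lt_of_succ_lt h⟩ : Fin (n+k)) = p := Fin.ext (by simp [hp]; omega)
    rw [e1, e2, Equiv.swap_apply_right, Equiv.swap_apply_left]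
    have hwn : w (i + 1) = true := by
      rw [h4]
      have := hw 1 le_rfl hk
      rw [show n + 1 - 1 = n by omega] at this
      exact this.mpr rfl
    exact iff_of_true hlt hwn
  by_cases h5 : i = n
  · -- compare positions n = q and n + 1
    have e1 : Equiv.swap p q ⟨i + 1, h⟩ = ⟨i + 1, h⟩ :=
      Equiv.swap_apply_of_ne_of_ne (by simp [hp, Fin.ext_iff]; omega)
        (by simp [hq, Fin.ext_iff]; omega)
    have e2 : (⟨i, Nat.lt_of_succ_lt h⟩ : Fin (n+k)) = q := Fin.ext (by simp [hq]; omega)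
    rw [e1, e2, Equiv.swap_apply_right]
    have hw2 := hw 2 (by omega) (by omega)
    rw [show n + 2 - 1 = n + 1 by omega] at hw2
    have hwn1 : ¬ (w (i + 1) = true) := by rw [show i + 1 = n + 1 by omega, hw2]; omega
    have h0 := hτ i h (by omega)
    rw [e2] at h0
    have hlt2 : τ q < τ ⟨i + 1, h⟩ := by
      have hnlt : ¬ τ ⟨i + 1, h⟩ < τ q := by rw [h0]; exact fun e => hwn1 e
      refine lt_of_le_of_ne (not_lt.mp hnlt) ?_
      intro e
      have := τ.injective e
      rw [hq] at this
      simp [Fin.ext_iff] at this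
      omega
    exact iff_of_false (lt_asymm (hlt.trans hlt2)) hwn1
  · -- i > n
    have e1 : Equiv.swap p q ⟨i + 1, h⟩ = ⟨i + 1, h⟩ :=
      Equiv.swap_apply_of_ne_of_ne (by simp [hp, Fin.ext_iff]; omega)
        (by simp [hq, Fin.ext_iff]; omega)
    have e2 : Equiv.swap p q ⟨i, Nat.lt_of_succ_lt h⟩ = ⟨i, Nat.lt_of_succ_lt h⟩ :=
      Equiv.swap_apply_of_ne_of_ne (by simp [hp, Fin.ext_iff]; omega)
        (by simp [hq, Fin.ext_iff]; omega)
    rw [e1, e2]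
    exact hτ i h (by omega)

end Stmt12Aux

namespace Stmt12Aux

lemma card_upper (w : ℕ → Bool) (hn : 2 ≤ n) (hk : 1 ≤ k)
    (hlast : w (n - 1) = false)
    (hw : ∀ i : ℕ, 1 ≤ i → i ≤ k → (w (n + i - 1) = true ↔ i % 2 = 1)) :
    Nat.card {τ : Equiv.Perm (Fin (n+k)) // OKb w n (n+k) τ}
      ≤ 2 * Nat.card {τ : Equiv.Perm (Fin (n+k)) // OKp w (n+k) τ} := by
  set G : {τ : Equiv.Perm (Fin (n+k)) // OKb w n (n+k) τ} →
      ({τ : Equiv.Perm (Fin (n+k)) // OKp w (n+k) τ} × Bool) := fun t =>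
    if hd : t.1 ⟨n, by omega⟩ < t.1 ⟨n - 1, by omega⟩ then
      (⟨t.1, desc_OK w hn hk hw t.1 t.2 hd⟩, true)
    else
      (⟨(Equiv.swap (⟨n - 1, by omega⟩ : Fin (n+k)) ⟨n, by omega⟩).trans t.1,
        asc_OK w hn hk hlast hw t.1 t.2 hd⟩, false) with hG
  have hinj : Function.Injective G := by
    rintro ⟨τ1, h1⟩ ⟨τ2, h2⟩ heq
    by_cases hd1 : τ1 ⟨n, by omega⟩ < τ1 ⟨n - 1, by omega⟩ <;>
      by_cases hd2 : τ2 ⟨n, by omega⟩ < τ2 ⟨n - 1, by omega⟩ <;>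
      simp only [hG, dif_pos, dif_neg, hd1, hd2, dite_true, dite_false, Prod.mk.injEq,
        Subtype.mk.injEq] at heq
    · exact Subtype.ext heq.1
    · exact absurd heq.2 (by simp)
    · exact absurd heq.2 (by simp)
    · refine Subtype.ext (Equiv.ext fun x => ?_)
      have h' := DFunLike.congr_fun heq.1 ((Equiv.swap (⟨n - 1, by omega⟩ : Fin (n+k))
        ⟨n, by omega⟩) x)
      simpa [Equiv.swap_apply_self] using h'
  have hle := Nat.card_le_card_of_injective G hinj
  rwa [Nat.card_prod, Nat.card_eq_fintype_card (α := Bool), Fintype.card_bool,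
    mul_comm] at hle

end Stmt12Aux

end Stmt12AuxSection


/-- `zigzag k` is the `k`-th Euler (zigzag) number: the number of alternating permutations
`σ` of `{1,…,k}` (modeled as `Fin k`, zero-based) with `σ(1) < σ(2) > σ(3) < σ(4) > ⋯`. -/
noncomputable def zigzag (k : ℕ) : ℕ :=
  Nat.card {σ : Equiv.Perm (Fin k) //
    ∀ i : ℕ, ∀ h : i + 1 < k,
      if i % 2 = 0 then σ ⟨i, Nat.lt_of_succ_lt h⟩ < σ ⟨i + 1, h⟩
      else σ ⟨i + 1, h⟩ < σ ⟨i, Nat.lt_of_succ_lt h⟩}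

theorem stmt12 (w : ℕ → Bool) (M : ℝ) (hM : 0 < M) (n k : ℕ) (hn : 2 ≤ n) (hk : 1 ≤ k)
    (hlast : w (n - 1) = false)
    (hw : ∀ i : ℕ, 1 ≤ i → i ≤ k → (w (n + i - 1) = true ↔ i % 2 = 1))
    (hE : (1 / 2 : ℝ) * ((zigzag k : ℝ) / (Nat.factorial k : ℝ)) * M ^ k ≥ 1) :
    (dCount w (n + k) : ℝ) * M ^ (n + k) / (Nat.factorial (n + k) : ℝ) ≥
      (dCount w n : ℝ) * M ^ n / (Nat.factorial n : ℝ) := by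
  have key : dCount w n * zigzag k * ((n+k).choose k) ≤ 2 * dCount w (n+k) := by
    have h1 := Stmt12Aux.card_lower (n := n) (k := k) w hn hw
    have h2 := Stmt12Aux.card_upper (n := n) (k := k) w hn hk hlast hw
    have e1 : dCount w n = Nat.card {π : Equiv.Perm (Fin n) // Stmt12Aux.OKp w n π} := rfl
    have e2 : zigzag k = Nat.card {σ : Equiv.Perm (Fin k) // Stmt12Aux.Alt k σ} := rfl
    have e3 : dCount w (n+k) =
      Nat.card {τ : Equiv.Perm (Fin (n+k)) // Stmt12Aux.OKp w (n+k) τ} := rfl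
    rw [e1, e2, e3]
    exact h1.trans h2
  have hfk : (0:ℝ) < (Nat.factorial k : ℝ) := by exact_mod_cast k.factorial_pos
  have hfn : (0:ℝ) < (Nat.factorial n : ℝ) := by exact_mod_cast n.factorial_pos
  have hfnk : (0:ℝ) < (Nat.factorial (n+k) : ℝ) := by exact_mod_cast (n+k).factorial_pos
  have hzk : (2:ℝ) * (Nat.factorial k : ℝ) ≤ (zigzag k : ℝ) * M ^ k := by
    have h1 : (1:ℝ) ≤ 1/2 * ((zigzag k : ℝ) / (Nat.factorial k : ℝ)) * M ^ k := hE
    have h2 := mul_le_mul_of_nonneg_left h1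
      (show (0:ℝ) ≤ 2 * (Nat.factorial k : ℝ) by positivity)
    have h3 : (2:ℝ) * (Nat.factorial k : ℝ) *
        (1/2 * ((zigzag k : ℝ) / (Nat.factorial k : ℝ)) * M ^ k)
        = (zigzag k : ℝ) * M ^ k := by field_simp
    rw [h3] at h2
    linarith
  have hkey : (dCount w n : ℝ) * (zigzag k : ℝ) * (((n+k).choose k : ℕ) : ℝ)
      ≤ 2 * (dCount w (n+k) : ℝ) := by exact_mod_cast key
  have hch : (((n+k).choose k : ℕ) : ℝ) * (Nat.factorial k : ℝ) * (Nat.factorial n : ℝ)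
      = (Nat.factorial (n+k) : ℝ) := by
    have := Nat.choose_mul_factorial_mul_factorial (show k ≤ n + k by omega)
    rw [Nat.add_sub_cancel] at this
    exact_mod_cast this
  rw [ge_iff_le, div_le_div_iff₀ hfn hfnk, ← hch, pow_add]
  have hA := mul_le_mul_of_nonneg_right hkey
    (show (0:ℝ) ≤ M ^ n * M ^ k * (Nat.factorial n : ℝ) by positivity)
  have hB := mul_le_mul_of_nonneg_right hzk
    (show (0:ℝ) ≤ (dCount w n : ℝ) * (((n+k).choose k : ℕ) : ℝ) * M ^ n *
      (Nat.factorial n : ℝ) by positivity)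
  nlinarith [hA, hB]
end
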